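/- arXiv:0803.3288 — 5 statements merged into one kernel-verified Lean document; each statement's English description precedes it below -/
import Mathlib

section
/- Let I ⊂ ℝ and suppose real sequences (β_n(λ)), (v_n(λ)), (w_n(λ)) for n ≥ N satisfy: inf_{λ∈I} v_n(λ) > -1 for all n ≥ N; w_N(λ) ≥ v_N(λ) for all λ ∈ I; and for all n > N and λ ∈ I: 0 ≤ 1 + β_n(λ), v_n(λ) ≤ (1+β_n(λ))·v_{n-1}(λ)/(1+v_{n-1}(λ)) − β_n(λ), and w_n(λ) ≥ (1+β_n(λ))·w_{n-1}(λ)/(1+w_{n-1}(λ)) − β_n(λ). If (X_n(λ))_{n≥N} satisfies the Riccati recurrence X_n = (1+β_n)·X_{n-1}/(X_{n-1}+1) − β_n for n > N and X_N(λ) ∈ [v_N(λ), w_N(λ)] for all λ ∈ I, then v_n(λ) ≤ X_n(λ) ≤ w_n(λ) for all n ≥ N and all λ ∈ I. -/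
/-- Monotonicity of the Riccati map on `(-1, ∞)` when `0 ≤ 1 + b`. -/
lemma riccati_mono (b a x : ℝ) (hb : 0 ≤ 1 + b) (ha : -1 < a) (hax : a ≤ x) :
    (1 + b) * a / (a + 1) ≤ (1 + b) * x / (x + 1) := by
  have ha' : 0 < a + 1 := by linarith
  have hx' : 0 < x + 1 := by linarith
  rw [div_le_div_iff₀ ha' hx']
  nlinarith

/-- Uniform-in-λ Kelley majorant–minorant comparison theorem (forward trapping). -/
theorem kelley_uniform_trapping (I : Set ℝ) (N : ℕ) (β v w X : ℕ → ℝ → ℝ)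
    (hv : ∀ n ≥ N, ∃ c > (-1 : ℝ), ∀ t ∈ I, c ≤ v n t)
    (hwv : ∀ t ∈ I, v N t ≤ w N t)
    (hβ : ∀ n > N, ∀ t ∈ I, 0 ≤ 1 + β n t)
    (hvrec : ∀ n > N, ∀ t ∈ I,
      v n t ≤ (1 + β n t) * v (n - 1) t / (1 + v (n - 1) t) - β n t)
    (hwrec : ∀ n > N, ∀ t ∈ I,
      w n t ≥ (1 + β n t) * w (n - 1) t / (1 + w (n - 1) t) - β n t)
    (hX : ∀ n > N, ∀ t ∈ I,
      X n t = (1 + β n t) * X (n - 1) t / (X (n - 1) t + 1) - β n t)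
    (hX0 : ∀ t ∈ I, v N t ≤ X N t ∧ X N t ≤ w N t) :
    ∀ n ≥ N, ∀ t ∈ I, v n t ≤ X n t ∧ X n t ≤ w n t := by
  intro n hn
  induction n, hn using Nat.le_induction with
  | base => exact hX0
  | succ n hn ih =>
    intro t ht
    have hgt : n + 1 > N := by omega
    obtain ⟨c, hc, hcv⟩ := hv n hn
    have hv1 : (-1 : ℝ) < v n t := lt_of_lt_of_le hc (hcv t ht)
    obtain ⟨hvX, hXw⟩ := ih t ht
    have hX1 : (-1 : ℝ) < X n t := lt_of_lt_of_le hv1 hvX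
    have hw1 : (-1 : ℝ) < w n t := lt_of_lt_of_le hX1 hXw
    have hb := hβ (n + 1) hgt t ht
    have hXr := hX (n + 1) hgt t ht
    have hvr := hvrec (n + 1) hgt t ht
    have hwr := hwrec (n + 1) hgt t ht
    simp only [Nat.add_sub_cancel] at hXr hvr hwr
    rw [add_comm (1 : ℝ) (v n t)] at hvr
    rw [add_comm (1 : ℝ) (w n t)] at hwr
    constructor
    · calc v (n + 1) t ≤ (1 + β (n+1) t) * v n t / (v n t + 1) - β (n+1) t := hvr
        _ ≤ (1 + β (n+1) t) * X n t / (X n t + 1) - β (n+1) t := by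
            have := riccati_mono (β (n+1) t) (v n t) (X n t) hb hv1 hvX
            linarith
        _ = X (n + 1) t := hXr.symm
    · calc X (n + 1) t = (1 + β (n+1) t) * X n t / (X n t + 1) - β (n+1) t := hXr
        _ ≤ (1 + β (n+1) t) * w n t / (w n t + 1) - β (n+1) t := by
            have := riccati_mono (β (n+1) t) (X n t) (w n t) hb hX1 hXw
            linarith
        _ ≤ w (n + 1) t := hwr
end

section
/- Let I ⊂ ℝ, N ∈ ℕ, and real sequences (β_n(λ)), (v_n(λ)), (w_n(λ)) satisfy: v_n(λ) ≥ w_n(λ) for all λ ∈ I and n ≥ N; sup over λ∈I and n≥N of |v_n(λ)| and of |w_n(λ)| are both strictly less than 1; and for all n > N and λ ∈ I: 0 ≤ 1+β_n(λ), v_n(λ) ≤ (1+β_n(λ))·v_{n-1}(λ)/(1+v_{n-1}(λ)) − β_n(λ), and w_n(λ) ≥ (1+β_n(λ))·w_{n-1}(λ)/(1+w_{n-1}(λ)) − β_n(λ). Then for each λ ∈ I there exists a solution (X_n(λ))_{n≥N} of the Riccati recurrence X_n = (1+β_n)·X_{n-1}/(X_{n-1}+1) − β_n (for n > N) such that w_n(λ)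 ≤ X_n(λ) ≤ v_n(λ) for all n ≥ N. -/
open Filter Topology

/-- Backward Riccati iteration: starting from `a` at index `s`, iterate the
backward map `x ↦ (x + b m) / (1 - x)` going down from index `s`. -/
noncomputable def kelleyIter (b : ℕ → ℝ) (s : ℕ) (a : ℝ) : ℕ → ℝ
  | 0 => a
  | k + 1 => (kelleyIter b s a k + b (s - k)) / (1 - kelleyIter b s a k)

/-- The `s`-th approximant: terminal data `w n` for `n ≥ s`, backward iteration below. -/
noncomputable def kelleyY (b w : ℕ → ℝ) (s n : ℕ) : ℝ :=
  if s ≤ n then w n else kelleyIter b s (w s) (s - n)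

lemma kelleyY_of_le (b w : ℕ → ℝ) {s n : ℕ} (h : s ≤ n) : kelleyY b w s n = w n :=
  if_pos h

lemma kelleyY_step (b w : ℕ → ℝ) {s n : ℕ} (h : n < s) :
    kelleyY b w s n = (kelleyY b w s (n + 1) + b (n + 1)) / (1 - kelleyY b w s (n + 1)) := by
  have key : kelleyIter b s (w s) (s - (n + 1)) = kelleyY b w s (n + 1) := by
    rcases eq_or_lt_of_le (Nat.succ_le_of_lt h) with he | hlt
    · rw [show s - (n+1) = 0 by omega, kelleyY, if_pos (le_of_eq he.symm)]
      rw [← he, kelleyIter]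
    · rw [kelleyY, if_neg (not_le.mpr hlt)]
  have h1 : s - n = (s - (n + 1)) + 1 := by omega
  rw [kelleyY, if_neg (not_le.mpr h), h1, kelleyIter, key,
    show s - (s - (n+1)) = n + 1 by omega]

lemma kelley_F_lt_one {β y : ℝ} (hb : 0 < 1 + β) (hy : -1 < y) :
    (1 + β) * y / (1 + y) - β < 1 := by
  have h1 : (0:ℝ) < 1 + y := by linarith
  have : (1 + β) * y / (1 + y) < 1 + β := by
    rw [div_lt_iff₀ h1]; nlinarith
  linarith

lemma kelley_B_F {β y : ℝ} (hb : 0 < 1 + β) (hy : -1 < y) :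
    (((1 + β) * y / (1 + y) - β) + β) / (1 - ((1 + β) * y / (1 + y) - β)) = y := by
  have h1 : (0:ℝ) < 1 + y := by linarith
  have h1' : (1:ℝ) + y ≠ 0 := ne_of_gt h1
  have h2eq : 1 - ((1 + β) * y / (1 + y) - β) = (1 + β) / (1 + y) := by
    field_simp; ring
  have h2 : 1 - ((1 + β) * y / (1 + y) - β) ≠ 0 := by
    rw [h2eq]; positivity
  have hb' : (1:ℝ) + β ≠ 0 := ne_of_gt hb
  field_simp
  rw [show (1 + β) * y - β * (1 + y) + β * (1 + y) = (1 + β) * y from by ring,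
    show 1 + y - ((1 + β) * y - β * (1 + y)) = 1 + β from by ring,
    mul_div_cancel_left₀ y hb']

lemma kelley_F_B {β x : ℝ} (hb : 0 < 1 + β) (hx : x < 1) :
    (1 + β) * ((x + β) / (1 - x)) / (1 + (x + β) / (1 - x)) - β = x := by
  have h1 : (0:ℝ) < 1 - x := by linarith
  have h1' : (1:ℝ) - x ≠ 0 := ne_of_gt h1
  have h2eq : 1 + (x + β) / (1 - x) = (1 + β) / (1 - x) := by
    field_simp; ring
  have h2 : 1 + (x + β) / (1 - x) ≠ 0 := by
    rw [h2eq]; positivity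
  have hb' : (1:ℝ) + β ≠ 0 := ne_of_gt hb
  field_simp
  rw [show 1 - x + (x + β) = 1 + β from by ring, mul_div_cancel_left₀ _ hb',
    add_sub_cancel_right]

lemma kelley_B_mono {β x x' : ℝ} (hb : 0 ≤ 1 + β) (hxx : x ≤ x') (hx' : x' < 1) :
    (x + β) / (1 - x) ≤ (x' + β) / (1 - x') := by
  have h1 : (0:ℝ) < 1 - x := by linarith
  have h2 : (0:ℝ) < 1 - x' := by linarith
  rw [div_le_div_iff₀ h1 h2]
  nlinarith [mul_nonneg hb (sub_nonneg.2 hxx)]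

/-- Core existence lemma with a fixed parameter. -/
lemma kelley_aux (N : ℕ) (β v w : ℕ → ℝ) (c : ℝ) (hc : c < 1)
    (hvw : ∀ n ≥ N, w n ≤ v n)
    (hv : ∀ n ≥ N, |v n| ≤ c) (hw : ∀ n ≥ N, |w n| ≤ c)
    (hβ : ∀ n > N, 0 < 1 + β n)
    (hvrec : ∀ n > N, v n ≤ (1 + β n) * v (n - 1) / (1 + v (n - 1)) - β n)
    (hwrec : ∀ n > N, w n ≥ (1 + β n) * w (n - 1) / (1 + w (n - 1)) - β n) :
    ∃ X : ℕ → ℝ,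
      (∀ n > N, X n = (1 + β n) * X (n - 1) / (X (n - 1) + 1) - β n) ∧
      ∀ n ≥ N, w n ≤ X n ∧ X n ≤ v n := by
  -- Part A: bounds w n ≤ Y s n ≤ v n for N ≤ n ≤ s
  have hA : ∀ d s n, N ≤ n → n + d = s →
      w n ≤ kelleyY β w s n ∧ kelleyY β w s n ≤ v n := by
    intro d
    induction d with
    | zero =>
      intro s n hn hs
      rw [kelleyY_of_le β w (by omega)]
      exact ⟨le_refl _, hvw n hn⟩
    | succ d ih =>
      intro s n hn hs
      have hns : n < s := by omega
      have ih1 := ih s (n + 1) (by omega) (by omega)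
      have hb := hβ (n + 1) (by omega)
      have hw1 := abs_le.mp (hw (n + 1) (by omega))
      have hv1 := abs_le.mp (hv (n + 1) (by omega))
      have hwn := abs_le.mp (hw n hn)
      have hvn := abs_le.mp (hv n hn)
      have hYlt : kelleyY β w s (n + 1) < 1 := lt_of_le_of_lt (ih1.2.trans hv1.2) hc
      rw [kelleyY_step β w hns]
      constructor
      · have hwr := hwrec (n + 1) (by omega)
        simp only [Nat.add_sub_cancel] at hwr
        calc w n = _ := (kelley_B_F hb (by linarith)).symm
          _ ≤ _ := kelley_B_mono hb.le (le_trans hwr ih1.1) hYlt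
      · have hvr := hvrec (n + 1) (by omega)
        simp only [Nat.add_sub_cancel] at hvr
        have hFlt : (1 + β (n + 1)) * v n / (1 + v n) - β (n + 1) < 1 :=
          kelley_F_lt_one hb (by linarith)
        calc _ ≤ _ := kelley_B_mono hb.le (ih1.2.trans hvr) hFlt
          _ = v n := kelley_B_F hb (by linarith)
  -- Part B: monotonicity in s
  have hBmono : ∀ d s n, N ≤ n → n + d = s → kelleyY β w s n ≤ kelleyY β w (s + 1) n := by
    intro d
    induction d with
    | zero =>
      intro s n hn hs
      have h0 : kelleyY β w s n = w n := kelleyY_of_le β w (by omega)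
      have h1 := kelleyY_step β w (show n < s + 1 by omega)
      have h2 : kelleyY β w (s + 1) (n + 1) = w (n + 1) := kelleyY_of_le β w (by omega)
      rw [h0, h1, h2]
      have hb := hβ (n + 1) (by omega)
      have hw1 := abs_le.mp (hw (n + 1) (by omega))
      have hwn := abs_le.mp (hw n hn)
      have hwr := hwrec (n + 1) (by omega)
      simp only [Nat.add_sub_cancel] at hwr
      calc w n = _ := (kelley_B_F hb (by linarith)).symm
        _ ≤ _ := kelley_B_mono hb.le hwr (by linarith)
    | succ d ih =>
      intro s n hn hs
      rw [kelleyY_step β w (show n < s by omega), kelleyY_step β w (show n < s + 1 by omega)]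
      have hb := hβ (n + 1) (by omega)
      have ihs := ih s (n + 1) (by omega) (by omega)
      have hA2 := hA (d + 1) (s + 1) (n + 1) (by omega) (by omega)
      have hv1 := abs_le.mp (hv (n + 1) (by omega))
      exact kelley_B_mono hb.le ihs (lt_of_le_of_lt (hA2.2.trans hv1.2) hc)
  -- Monotone bounded sequences
  have hmono : ∀ n, N ≤ n → Monotone (fun k => kelleyY β w (n + k) n) := by
    intro n hn
    apply monotone_nat_of_le_succ
    intro k
    exact hBmono k (n + k) n hn rfl
  have hbdd : ∀ n, N ≤ n → BddAbove (Set.range fun k => kelleyY β w (n + k) n) := by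
    intro n hn
    refine ⟨v n, ?_⟩
    rintro x ⟨k, rfl⟩
    exact (hA k (n + k) n hn rfl).2
  have htend : ∀ n, N ≤ n →
      Tendsto (fun k => kelleyY β w (n + k) n) atTop (𝓝 (⨆ k, kelleyY β w (n + k) n)) :=
    fun n hn => tendsto_atTop_ciSup (hmono n hn) (hbdd n hn)
  have hXlo : ∀ n, N ≤ n → w n ≤ ⨆ k, kelleyY β w (n + k) n := by
    intro n hn
    have h0 : kelleyY β w (n + 0) n = w n := kelleyY_of_le β w (by omega)
    calc w n = kelleyY β w (n + 0) n := h0.symm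
      _ ≤ _ := le_ciSup (hbdd n hn) 0
  have hXhi : ∀ n, N ≤ n → (⨆ k, kelleyY β w (n + k) n) ≤ v n := by
    intro n hn
    exact ciSup_le fun k => (hA k (n + k) n hn rfl).2
  refine ⟨fun n => ⨆ k, kelleyY β w (n + k) n, ?_, fun n hn => ⟨hXlo n hn, hXhi n hn⟩⟩
  intro n hn
  obtain ⟨m, rfl⟩ : ∃ m, n = m + 1 := ⟨n - 1, by omega⟩
  simp only [Nat.add_sub_cancel]
  have hmN : N ≤ m := by omega
  have hb := hβ (m + 1) hn
  have hX1lt : (⨆ k, kelleyY β w (m + 1 + k) (m + 1)) < 1 :=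
    lt_of_le_of_lt ((hXhi (m + 1) (by omega)).trans (abs_le.mp (hv (m + 1) (by omega))).2) hc
  have t1 := htend (m + 1) (by omega)
  have t2 : Tendsto
      (fun k => (kelleyY β w (m + 1 + k) (m + 1) + β (m + 1)) /
        (1 - kelleyY β w (m + 1 + k) (m + 1))) atTop
      (𝓝 (((⨆ k, kelleyY β w (m + 1 + k) (m + 1)) + β (m + 1)) /
        (1 - ⨆ k, kelleyY β w (m + 1 + k) (m + 1)))) := by
    apply Tendsto.div (t1.add tendsto_const_nhds) (tendsto_const_nhds.sub t1)
    have : (0:ℝ) < 1 - ⨆ k, kelleyY β w (m + 1 + k) (m + 1) := by linarith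
    exact ne_of_gt this
  have t3 : Tendsto (fun k => kelleyY β w (m + 1 + k) m) atTop
      (𝓝 (⨆ k, kelleyY β w (m + k) m)) := by
    have h4 := (htend m hmN).comp (tendsto_add_atTop_nat 1)
    refine h4.congr fun k => ?_
    simp only [Function.comp_apply]
    congr 1
    omega
  have t3' : Tendsto (fun k => kelleyY β w (m + 1 + k) m) atTop
      (𝓝 (((⨆ k, kelleyY β w (m + 1 + k) (m + 1)) + β (m + 1)) /
        (1 - ⨆ k, kelleyY β w (m + 1 + k) (m + 1)))) :=
    t2.congr fun k => (kelleyY_step β w (show m < m + 1 + k by omega)).symm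
  have hXm : (⨆ k, kelleyY β w (m + k) m) =
      ((⨆ k, kelleyY β w (m + 1 + k) (m + 1)) + β (m + 1)) /
        (1 - ⨆ k, kelleyY β w (m + 1 + k) (m + 1)) :=
    tendsto_nhds_unique t3 t3'
  have hinv := kelley_F_B hb hX1lt
  rw [← hXm] at hinv
  rw [add_comm (⨆ k, kelleyY β w (m + k) m) 1]
  exact hinv.symm

/-- Uniform-in-λ Kelley theorem: existence of a solution of the Riccati recurrence
trapped between a majorant and a minorant (backward construction). -/
theorem kelley_uniform_existence (I : Set ℝ) (N : ℕ) (β v w : ℕ → ℝ → ℝ)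
    (hvw : ∀ t ∈ I, ∀ n ≥ N, w n t ≤ v n t)
    (hvbd : ∃ c < (1 : ℝ), ∀ t ∈ I, ∀ n ≥ N, |v n t| ≤ c)
    (hwbd : ∃ c < (1 : ℝ), ∀ t ∈ I, ∀ n ≥ N, |w n t| ≤ c)
    (hβ : ∀ n > N, ∀ t ∈ I, 0 ≤ 1 + β n t)
    (hvrec : ∀ n > N, ∀ t ∈ I,
      v n t ≤ (1 + β n t) * v (n - 1) t / (1 + v (n - 1) t) - β n t)
    (hwrec : ∀ n > N, ∀ t ∈ I,
      w n t ≥ (1 + β n t) * w (n - 1) t / (1 + w (n - 1) t) - β n t) :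
    ∀ t ∈ I, ∃ X : ℕ → ℝ,
      (∀ n > N, X n = (1 + β n t) * X (n - 1) / (X (n - 1) + 1) - β n t) ∧
      ∀ n ≥ N, w n t ≤ X n ∧ X n ≤ v n t := by
  intro t ht
  obtain ⟨cv, hcv1, hcv⟩ := hvbd
  obtain ⟨cw, hcw1, hcw⟩ := hwbd
  have hc1 : max cv cw < 1 := max_lt hcv1 hcw1
  have hv : ∀ n ≥ N, |v n t| ≤ max cv cw :=
    fun n hn => (hcv t ht n hn).trans (le_max_left _ _)
  have hw : ∀ n ≥ N, |w n t| ≤ max cv cw :=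
    fun n hn => (hcw t ht n hn).trans (le_max_right _ _)
  have hβpos : ∀ n > N, 0 < 1 + β n t := by
    intro n hn
    rcases lt_or_eq_of_le (hβ n hn t ht) with h | h
    · exact h
    · exfalso
      have hr := hwrec n hn t ht
      rw [← h, zero_mul, zero_div, zero_sub] at hr
      have h2 := (abs_le.mp (hw n hn.le)).2
      linarith
  exact kelley_aux N (fun n => β n t) (fun n => v n t) (fun n => w n t) (max cv cw) hc1
    (fun n hn => hvw t ht n hn) (fun n hn => hv n hn) (fun n hn => hw n hn)
    hβpos (fun n hn => hvrec n hn t ht) (fun n hn => hwrec n hn t ht)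
end

section
/- Let I ⊂ ℝ, 0 < p < 1, and ψ₀ : I → ℝ with inf_{λ∈I} ψ₀(λ) > 0 and sup_{λ∈I} ψ₀(λ) < ∞. Suppose (φ_n(λ)) satisfies φ_n(λ) = Σ_{k=0}^{M} ψ_k(λ) n^{-s_k} + õ_I(n^{-p-1}) with p = s₀ < s_k ≤ p+1 and each ψ_k bounded on I. Then φ_n(λ) − φ_{n-1}(λ) = −p·ψ₀(λ)·n^{-p-1} + õ_I(n^{-p-1}) as n → ∞, where õ_I denotes a remainder r_n(λ) with sup_{λ∈I}|r_n(λ)| / n^{-p-1} → 0. -/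
open Filter Topology Real

lemma slope_lim (s : ℝ) :
    Tendsto (fun n : ℕ => (n : ℝ) * ((1 - 1 / (n : ℝ)) ^ (-s) - 1)) atTop (𝓝 s) := by
  have h1 : HasDerivAt (fun x : ℝ => 1 - x) (-1) 0 := by
    simpa using (hasDerivAt_id (0:ℝ)).const_sub 1
  have hg : HasDerivAt (fun x : ℝ => (1 - x) ^ (-s)) s 0 := by
    have := h1.rpow_const (p := -s) (Or.inl (by norm_num))
    simpa using this
  have hslope := hasDerivAt_iff_tendsto_slope.mp hg
  have hn : Tendsto (fun n : ℕ => 1 / (n : ℝ)) atTop (𝓝[≠] (0:ℝ)) := by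
    apply tendsto_nhdsWithin_of_tendsto_nhds_of_eventually_within
    · exact tendsto_one_div_atTop_nhds_zero_nat
    · filter_upwards [eventually_ge_atTop 1] with n hn
      have : (0:ℝ) < (n:ℝ) := by exact_mod_cast hn
      simp [Set.mem_compl_iff, one_div, this.ne']
  have h2 := hslope.comp hn
  apply h2.congr'
  filter_upwards [eventually_ge_atTop 1] with n hn
  have hn0 : (n:ℝ) ≠ 0 := by positivity
  simp only [Function.comp, slope_def_field]
  rw [show (1:ℝ) - 0 = 1 by ring, Real.one_rpow, sub_zero]
  field_simp

lemma diff_id (p s : ℝ) (n : ℕ) (hn : 2 ≤ n) :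
    (n:ℝ)^(p+1) * ((n:ℝ)^(-s) - ((n:ℝ)-1)^(-s)) =
      -((n:ℝ)^(p-s)) * ((n:ℝ) * ((1 - 1/(n:ℝ))^(-s) - 1)) := by
  have hx : (1:ℝ) < (n:ℝ) := by exact_mod_cast hn.trans_lt' one_lt_two
  have hx0 : (0:ℝ) < (n:ℝ) := by linarith
  have h1 : (0:ℝ) ≤ 1 - 1/(n:ℝ) := by
    rw [sub_nonneg, div_le_one hx0]; linarith
  have hsplit : ((n:ℝ)-1)^(-s) = (n:ℝ)^(-s) * (1 - 1/(n:ℝ))^(-s) := by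
    rw [← Real.mul_rpow hx0.le h1]
    congr 1
    field_simp
  rw [hsplit]
  have e1 : (n:ℝ)^(p+1) * (n:ℝ)^(-s) = (n:ℝ)^(p-s) * (n:ℝ) := by
    rw [← Real.rpow_add hx0, show p + 1 + -s = (p-s) + 1 by ring,
      Real.rpow_add hx0, Real.rpow_one]
  calc (n:ℝ)^(p+1) * ((n:ℝ)^(-s) - (n:ℝ)^(-s) * (1 - 1/(n:ℝ))^(-s))
      = ((n:ℝ)^(p+1) * (n:ℝ)^(-s)) * (1 - (1 - 1/(n:ℝ))^(-s)) := by ring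
    _ = ((n:ℝ)^(p-s) * (n:ℝ)) * (1 - (1 - 1/(n:ℝ))^(-s)) := by rw [e1]
    _ = -((n:ℝ)^(p-s)) * ((n:ℝ) * ((1 - 1/(n:ℝ))^(-s) - 1)) := by ring

lemma tendB (p s : ℝ) (hps : p < s) :
    Tendsto (fun n : ℕ => (n:ℝ)^(p+1) * ((n:ℝ)^(-s) - ((n:ℝ)-1)^(-s))) atTop (𝓝 0) := by
  have h1 : Tendsto (fun n : ℕ => ((n:ℝ)^(p-s))) atTop (𝓝 0) := by
    have := (tendsto_rpow_neg_atTop (by linarith : (0:ℝ) < s - p)).comp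
      tendsto_natCast_atTop_atTop
    simpa [Function.comp_def, show -(s-p) = p - s by ring] using this
  have h2 := h1.neg.mul (slope_lim s)
  rw [show -(0:ℝ) * s = 0 by ring] at h2
  apply h2.congr'
  filter_upwards [eventually_ge_atTop 2] with n hn
  exact (diff_id p s n hn).symm

lemma tendA (p : ℝ) :
    Tendsto (fun n : ℕ => (n:ℝ)^(p+1) *
      ((n:ℝ)^(-p) - ((n:ℝ)-1)^(-p) + p * (n:ℝ)^(-p-1))) atTop (𝓝 0) := by
  have h2 := ((slope_lim p).neg).add_const p
  rw [neg_add_cancel] at h2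
  apply h2.congr'
  filter_upwards [eventually_ge_atTop 2] with n hn
  have hx0 : (0:ℝ) < (n:ℝ) := by positivity
  have e1 : (n:ℝ)^(p+1) * (n:ℝ)^(-p-1) = 1 := by
    rw [← Real.rpow_add hx0, show p + 1 + (-p-1) = 0 by ring, Real.rpow_zero]
  have e2 := diff_id p p n hn
  rw [sub_self, Real.rpow_zero] at e2
  calc -((n:ℝ) * ((1 - 1/(n:ℝ))^(-p) - 1)) + p
      = -(1:ℝ) * ((n:ℝ) * ((1 - 1/(n:ℝ))^(-p) - 1)) + p * 1 := by ring
    _ = (n:ℝ)^(p+1) * ((n:ℝ)^(-p) - ((n:ℝ)-1)^(-p)) + p * ((n:ℝ)^(p+1) * (n:ℝ)^(-p-1)) := by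
        rw [← e2, e1]
    _ = (n:ℝ)^(p+1) * ((n:ℝ)^(-p) - ((n:ℝ)-1)^(-p) + p * (n:ℝ)^(-p-1)) := by ring

lemma abs_bound (p : ℝ) (a : ℕ → ℝ)
    (h : Tendsto (fun n : ℕ => (n:ℝ)^(p+1) * a n) atTop (𝓝 0))
    {δ : ℝ} (hδ : 0 < δ) :
    ∀ᶠ n : ℕ in atTop, |a n| ≤ δ * (n:ℝ)^(-p-1) := by
  have h2 : ∀ᶠ n : ℕ in atTop, |(n:ℝ)^(p+1) * a n| < δ := by
    have := Metric.tendsto_nhds.mp h δ hδ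
    simpa [Real.dist_eq, abs_mul] using this
  filter_upwards [h2, eventually_ge_atTop 1] with n h2 h1
  have hx0 : (0:ℝ) < (n:ℝ) := by positivity
  have hpow : (0:ℝ) < (n:ℝ)^(p+1) := Real.rpow_pos_of_pos hx0 _
  have hinv : (n:ℝ)^(-p-1) = ((n:ℝ)^(p+1))⁻¹ := by
    rw [show -p-1 = -(p+1) by ring, Real.rpow_neg hx0.le]
  rw [abs_mul, abs_of_pos hpow] at h2
  rw [hinv, ← div_eq_mul_inv, le_div_iff₀ hpow]
  nlinarith [abs_nonneg (a n)]



/-- `r_n(λ) = õ_I(h_n)`: the remainder is uniformly little-o of `h_n` on `I`. -/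
def LittleOI (I : Set ℝ) (r : ℕ → ℝ → ℝ) (h : ℕ → ℝ) : Prop :=
  ∀ ε > (0 : ℝ), ∃ N : ℕ, ∀ n > N, ∀ t ∈ I, |r n t| ≤ ε * |h n|

/-- Uniform "differentiability in n" of the asymptotic expansion:
`φ_n(λ) − φ_{n-1}(λ) = −p·ψ₀(λ)·n^{-p-1} + õ_I(n^{-p-1})`. -/
theorem expansion_difference_asymptotics (I : Set ℝ) (p : ℝ) (hp0 : 0 < p) (hp1 : p < 1)
    (M : ℕ) (ψ : ℕ → ℝ → ℝ) (s : ℕ → ℝ) (φ : ℕ → ℝ → ℝ)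
    (hs0 : s 0 = p)
    (hs : ∀ k, 1 ≤ k → k ≤ M → p < s k ∧ s k ≤ p + 1)
    (hψ0pos : ∃ c > (0 : ℝ), ∀ t ∈ I, c ≤ ψ 0 t)
    (hψbdd : ∀ k ≤ M, ∃ C : ℝ, ∀ t ∈ I, |ψ k t| ≤ C)
    (hφ : LittleOI I
      (fun n t => φ n t - ∑ k ∈ Finset.range (M + 1), ψ k t * (n : ℝ) ^ (-(s k)))
      (fun n => (n : ℝ) ^ (-p - 1))) :
    LittleOI I (fun n t => φ n t - φ (n - 1) t + p * ψ 0 t * (n : ℝ) ^ (-p - 1))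
      (fun n => (n : ℝ) ^ (-p - 1)) := by
  intro ε hε
  -- bounds on ψ
  have hb : ∀ k : ℕ, ∃ C : ℝ, ∀ t ∈ I, k ≤ M → |ψ k t| ≤ C := by
    intro k
    by_cases h : k ≤ M
    · obtain ⟨C, hC⟩ := hψbdd k h; exact ⟨C, fun t ht _ => hC t ht⟩
    · exact ⟨0, fun t _ h' => absurd h' h⟩
  choose C hC using hb
  set D : ℝ := ∑ k ∈ Finset.range (M + 1), max (C k) 1 with hDdef
  have hD : (1:ℝ) ≤ D := by
    have h1 := Finset.card_nsmul_le_sum (Finset.range (M+1)) (fun k => max (C k) 1) 1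
      (fun i _ => le_max_right _ _)
    simp only [Finset.card_range, nsmul_eq_mul, mul_one] at h1
    have : (1:ℝ) ≤ (M+1:ℕ) := by exact_mod_cast Nat.one_le_iff_ne_zero.mpr (Nat.succ_ne_zero M)
    linarith
  have hD0 : (0:ℝ) < D := by linarith
  set δ : ℝ := ε / (3 * D) with hδdef
  have hδ : 0 < δ := by positivity
  -- the per-term sequences
  set a : ℕ → ℕ → ℝ := fun k n =>
    (n:ℝ)^(-(s k)) - ((n:ℝ)-1)^(-(s k)) + (if k = 0 then p * (n:ℝ)^(-p-1) else 0) with hadef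
  have haev : ∀ k ∈ Finset.range (M+1), ∀ᶠ n : ℕ in Filter.atTop, |a k n| ≤ δ * (n:ℝ)^(-p-1) := by
    intro k hk
    rcases Nat.eq_zero_or_pos k with hk0 | hk1
    · subst hk0
      have := abs_bound p (a 0) ?_ hδ
      · exact this
      · simp only [hadef, if_pos rfl, hs0]
        exact tendA p
    · have hp' := (hs k hk1 (by simpa using Nat.lt_succ_iff.mp (Finset.mem_range.mp hk))).1
      have := abs_bound p (a k) ?_ hδ
      · exact this
      · simp only [hadef, if_neg (Nat.pos_iff_ne_zero.mp hk1), add_zero]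
        exact tendB p (s k) hp'
  have hall := (Filter.eventually_all_finset (Finset.range (M+1))).mpr haev
  obtain ⟨N0, hN0⟩ := Filter.eventually_atTop.mp hall
  obtain ⟨N1, hN1⟩ := hφ (ε/3) (by positivity)
  obtain ⟨N2, hN2⟩ := hφ (ε/12) (by positivity)
  refine ⟨N0 + N1 + N2 + 2, fun n hn t ht => ?_⟩
  have hn2 : 2 ≤ n := by omega
  have hx1 : (1:ℝ) ≤ (n:ℝ) := by exact_mod_cast Nat.one_le_of_lt hn2
  have hx0 : (0:ℝ) < (n:ℝ) := by linarith
  have hx2 : (2:ℝ) ≤ (n:ℝ) := by exact_mod_cast hn2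
  have hcast : (((n-1:ℕ)):ℝ) = (n:ℝ) - 1 := by
    have : 1 ≤ n := by omega
    push_cast [this]; ring
  have hpow_pos : (0:ℝ) < (n:ℝ)^(-p-1) := Real.rpow_pos_of_pos hx0 _
  -- key algebraic identity
  have key : φ n t - φ (n-1) t + p * ψ 0 t * (n:ℝ)^(-p-1)
      = (φ n t - ∑ k ∈ Finset.range (M + 1), ψ k t * (n : ℝ) ^ (-(s k)))
        - (φ (n-1) t - ∑ k ∈ Finset.range (M + 1), ψ k t * ((n-1:ℕ) : ℝ) ^ (-(s k)))
        + ∑ k ∈ Finset.range (M+1), ψ k t * a k n := by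
    have hsum : ∑ k ∈ Finset.range (M+1), ψ k t * a k n
        = (∑ k ∈ Finset.range (M+1), ψ k t * (n:ℝ)^(-(s k)))
          - (∑ k ∈ Finset.range (M+1), ψ k t * ((n-1:ℕ):ℝ)^(-(s k)))
          + p * ψ 0 t * (n:ℝ)^(-p-1) := by
      simp only [hadef, hcast, mul_add, mul_sub, mul_ite, mul_zero]
      rw [Finset.sum_add_distrib, Finset.sum_sub_distrib,
        Finset.sum_ite_eq' (Finset.range (M+1)) 0 (fun k => ψ k t * (p * (n:ℝ)^(-p-1)))]
      simp [Finset.mem_range]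
      ring
    rw [hsum]; ring
  show |φ n t - φ (n-1) t + p * ψ 0 t * (n:ℝ)^(-p-1)| ≤ ε * |(n:ℝ)^(-p-1)|
  rw [key]
  -- bound the three pieces
  have hRn : |φ n t - ∑ k ∈ Finset.range (M + 1), ψ k t * (n : ℝ) ^ (-(s k))|
      ≤ (ε/3) * (n:ℝ)^(-p-1) := by
    have := hN1 n (by omega) t ht
    rwa [abs_of_pos hpow_pos] at this
  have hy0 : (0:ℝ) < ((n-1:ℕ):ℝ) := by
    rw [hcast]; linarith
  have hRn1 : |φ (n-1) t - ∑ k ∈ Finset.range (M + 1), ψ k t * ((n-1:ℕ) : ℝ) ^ (-(s k))|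
      ≤ (ε/3) * (n:ℝ)^(-p-1) := by
    have h1 := hN2 (n-1) (by omega) t ht
    rw [abs_of_pos (Real.rpow_pos_of_pos hy0 _)] at h1
    have h4 : ((n-1:ℕ):ℝ)^(-p-1) ≤ 4 * (n:ℝ)^(-p-1) := by
      have hhalf : (n:ℝ)/2 ≤ ((n-1:ℕ):ℝ) := by rw [hcast]; linarith
      have hh0 : (0:ℝ) < (n:ℝ)/2 := by linarith
      have m1 : ((n-1:ℕ):ℝ)^(-p-1) ≤ ((n:ℝ)/2)^(-p-1) :=
        Real.rpow_le_rpow_of_nonpos hh0 hhalf (by linarith)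
      have m2 : ((n:ℝ)/2)^(-p-1) = (n:ℝ)^(-p-1) * (2:ℝ)^(p+1) := by
        rw [Real.div_rpow hx0.le (by norm_num : (0:ℝ) ≤ 2),
          show -p-1 = -(p+1) by ring,
          Real.rpow_neg (by norm_num : (0:ℝ) ≤ 2) (p+1), div_eq_mul_inv, inv_inv]
      have m3 : (2:ℝ)^(p+1) ≤ 4 := by
        have h2 := Real.rpow_le_rpow_of_exponent_le (by norm_num : (1:ℝ) ≤ 2)
          (by linarith : p+1 ≤ (2:ℝ))
        have h22 := Real.rpow_natCast (2:ℝ) 2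
        norm_num at h22
        linarith
      calc ((n-1:ℕ):ℝ)^(-p-1) ≤ (n:ℝ)^(-p-1) * (2:ℝ)^(p+1) := m2 ▸ m1
        _ ≤ (n:ℝ)^(-p-1) * 4 := by nlinarith
        _ = 4 * (n:ℝ)^(-p-1) := by ring
    calc |φ (n-1) t - ∑ k ∈ Finset.range (M + 1), ψ k t * ((n-1:ℕ) : ℝ) ^ (-(s k))|
        ≤ (ε/12) * ((n-1:ℕ):ℝ)^(-p-1) := h1
      _ ≤ (ε/12) * (4 * (n:ℝ)^(-p-1)) := by nlinarith
      _ = (ε/3) * (n:ℝ)^(-p-1) := by ring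
  have hSum : |∑ k ∈ Finset.range (M+1), ψ k t * a k n| ≤ (ε/3) * (n:ℝ)^(-p-1) := by
    calc |∑ k ∈ Finset.range (M+1), ψ k t * a k n|
        ≤ ∑ k ∈ Finset.range (M+1), |ψ k t * a k n| := Finset.abs_sum_le_sum_abs _ _
      _ ≤ ∑ k ∈ Finset.range (M+1), (max (C k) 1) * (δ * (n:ℝ)^(-p-1)) := by
          apply Finset.sum_le_sum
          intro k hk
          rw [abs_mul]
          have h1 : |ψ k t| ≤ max (C k) 1 :=
            le_trans (hC k t ht (Nat.lt_succ_iff.mp (Finset.mem_range.mp hk)))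
              (le_max_left _ _)
          have h2 : |a k n| ≤ δ * (n:ℝ)^(-p-1) := hN0 n (by omega) k hk
          exact mul_le_mul h1 h2 (abs_nonneg _) (by positivity)
      _ = D * (δ * (n:ℝ)^(-p-1)) := by rw [← Finset.sum_mul]
      _ = (ε/3) * (n:ℝ)^(-p-1) := by
          rw [hδdef]; field_simp
  rw [abs_of_pos hpow_pos]
  set A := φ n t - ∑ k ∈ Finset.range (M + 1), ψ k t * (n : ℝ) ^ (-(s k)) with hA
  set B := φ (n-1) t - ∑ k ∈ Finset.range (M + 1), ψ k t * ((n-1:ℕ) : ℝ) ^ (-(s k)) with hB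
  set S := ∑ k ∈ Finset.range (M+1), ψ k t * a k n with hS
  have tri : |A - B + S| ≤ |A| + |B| + |S| := by
    calc |A - B + S| ≤ |A - B| + |S| := abs_add_le _ _
      _ ≤ (|A| + |B|) + |S| := by
          have := abs_sub A B
          exact add_le_add_left (abs_sub _ _) _
  linarith
end

section
/- Let I ⊂ ℝ, 0 < p < 1, and suppose (φ_n(λ)) satisfies the expansion φ_n(λ) = Σ_{k=0}^{M} ψ_k(λ)n^{-s_k} + õ_I(n^{-p-1}) with p = s₀ < s_k ≤ p+1, ψ₀ uniformly positive and bounded on I, and ψ_k bounded on I for k ≥ 1. Then for any real constants A⁺ < p/2 < A⁻ there exists N ∈ ℕ such that the sequences v_n^±(λ) := ±φ_n(λ) + A^± n^{-1} satisfy v_n^±(λ)·(1 + v_{n-1}^±(λ)) ≤ v_{n-1}^±(λ) + φ_n(λ)² for all n > N and all λ ∈ I. -/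
open Filter Real Set

private lemma rpow_base_antitone {a b : ℝ} (ha : 0 < a) (hab : a ≤ b) {q : ℝ} (hq : 0 ≤ q) :
    b ^ (-q) ≤ a ^ (-q) :=
  Real.rpow_le_rpow_of_nonpos ha hab (neg_nonpos.mpr hq)

/-- MVT bounds for the difference of negative powers. -/
private lemma mvt_rpow {s : ℝ} (hs : 0 < s) {m : ℝ} (hm : 2 ≤ m) :
    s * m ^ (-s - 1) ≤ (m - 1) ^ (-s) - m ^ (-s) ∧
      (m - 1) ^ (-s) - m ^ (-s) ≤ s * (m - 1) ^ (-s - 1) := by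
  have hm1 : (1:ℝ) ≤ m - 1 := by linarith
  have hlt : m - 1 < m := by linarith
  have hpos : ∀ x ∈ Set.Icc (m-1) m, (0:ℝ) < x := fun x hx => lt_of_lt_of_le one_pos (hm1.trans hx.1)
  have hderiv : ∀ x ∈ Set.Ioo (m-1) m, HasDerivAt (fun y : ℝ => y ^ (-s)) (-s * x ^ (-s - 1)) x := by
    intro x hx
    have hx0 : x ≠ 0 := ne_of_gt (hpos x ⟨hx.1.le, hx.2.le⟩)
    simpa using Real.hasDerivAt_rpow_const (p := -s) (Or.inl hx0)
  have hcont : ContinuousOn (fun y : ℝ => y ^ (-s)) (Set.Icc (m-1) m) := by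
    intro x hx
    exact (Real.continuousAt_rpow_const x (-s) (Or.inl (ne_of_gt (hpos x hx)))).continuousWithinAt
  obtain ⟨ξ, hξ, hξeq⟩ := exists_hasDerivAt_eq_slope (fun y : ℝ => y ^ (-s))
    (fun x => -s * x ^ (-s - 1)) hlt hcont hderiv
  have hsub : m - (m - 1) = 1 := by ring
  rw [hsub, div_one] at hξeq
  have hξ0 : 0 < ξ := lt_of_lt_of_le one_pos (hm1.trans hξ.1.le)
  have h1 : ξ ^ (-s-1) ≤ (m-1) ^ (-s-1) := by
    have := rpow_base_antitone (lt_of_lt_of_le one_pos hm1) hξ.1.le (q := s+1) (by linarith)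
    simpa [show -(s+1) = -s-1 by ring] using this
  have h2 : m ^ (-s-1) ≤ ξ ^ (-s-1) := by
    have := rpow_base_antitone hξ0 hξ.2.le (q := s+1) (by linarith)
    simpa [show -(s+1) = -s-1 by ring] using this
  constructor
  · nlinarith [hξeq]
  · nlinarith [hξeq]

/-- `(m-1)^(-q) ≤ 4 m^(-q)` for `0 < q ≤ 2`, `2 ≤ m`. -/
private lemma four_bound {q m : ℝ} (hq : 0 < q) (hq2 : q ≤ 2) (hm : 2 ≤ m) :
    (m - 1) ^ (-q) ≤ 4 * m ^ (-q) := by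
  have hm0 : (0:ℝ) < m := by linarith
  have h2 : (0:ℝ) < m/2 := by linarith
  have hle : m/2 ≤ m - 1 := by linarith
  have h1 : (m - 1) ^ (-q) ≤ (m/2) ^ (-q) := rpow_base_antitone h2 hle hq.le
  have h3 : (m/2) ^ (-q) = 2 ^ q * m ^ (-q) := by
    rw [div_eq_mul_inv, Real.mul_rpow hm0.le (by norm_num), Real.inv_rpow (by norm_num),
      Real.rpow_neg (by norm_num : (0:ℝ) ≤ 2), inv_inv]
    ring
  have h4 : (2:ℝ) ^ q ≤ 2 ^ (2:ℝ) := Real.rpow_le_rpow_of_exponent_le one_le_two hq2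
  have h5 : (2:ℝ) ^ (2:ℝ) = 4 := by
    rw [show (2:ℝ) = ((2:ℕ):ℝ) from by norm_num, Real.rpow_natCast]; norm_num
  have h6 : 0 ≤ m ^ (-q) := (Real.rpow_pos_of_pos hm0 _).le
  rw [h3] at h1
  nlinarith

/-- Eventually `(n-1)^(-q) ≤ ε n^(-p')` when `p' < q`. -/
private lemma aux_ev {p' q : ℝ} (hp' : 0 ≤ p') (hq : p' < q) {ε : ℝ} (hε : 0 < ε) :
    ∃ N : ℕ, ∀ n : ℕ, n > N → ((n:ℝ) - 1) ^ (-q) ≤ ε * (n:ℝ) ^ (-p') := by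
  have htt : Tendsto (fun n : ℕ => ((n:ℝ) - 1) ^ (p' - q)) atTop (nhds 0) := by
    have h1 : Tendsto (fun n : ℕ => (n:ℝ) - 1) atTop atTop :=
      tendsto_atTop_add_const_right _ _ (tendsto_natCast_atTop_atTop (R := ℝ))
    have h2 := (tendsto_rpow_neg_atTop (y := q - p') (by linarith)).comp h1
    refine h2.congr (fun n => ?_)
    simp [show -(q - p') = p' - q by ring]
  have hε' : (0:ℝ) < ε / 2 ^ p' := div_pos hε (Real.rpow_pos_of_pos two_pos _)
  obtain ⟨N, hN⟩ := Metric.tendsto_atTop.mp htt (ε / 2 ^ p') hε'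
  refine ⟨max N 1, fun n hn => ?_⟩
  have hn1 : 1 < n := lt_of_le_of_lt (le_max_right N 1) hn
  have hm : (2:ℝ) ≤ (n:ℝ) := by exact_mod_cast hn1
  have hm1 : (0:ℝ) < (n:ℝ) - 1 := by linarith
  have hm0 : (0:ℝ) < (n:ℝ) := by linarith
  have hsplit : ((n:ℝ) - 1) ^ (-q) = ((n:ℝ) - 1) ^ (-p') * ((n:ℝ) - 1) ^ (p' - q) := by
    rw [← Real.rpow_add hm1]; ring_nf
  have hb : ((n:ℝ) - 1) ^ (-p') ≤ 2 ^ p' * (n:ℝ) ^ (-p') := by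
    have h1 : ((n:ℝ) - 1) ^ (-p') ≤ ((n:ℝ)/2) ^ (-p') :=
      rpow_base_antitone (by linarith) (by linarith) hp'
    have h3 : ((n:ℝ)/2) ^ (-p') = 2 ^ p' * (n:ℝ) ^ (-p') := by
      rw [div_eq_mul_inv, Real.mul_rpow hm0.le (by norm_num), Real.inv_rpow (by norm_num),
        Real.rpow_neg (by norm_num : (0:ℝ) ≤ 2), inv_inv]
      ring
    linarith [h1, h3.le]
  have hd : ((n:ℝ) - 1) ^ (p' - q) ≤ ε / 2 ^ p' := by
    have := hN n (le_of_lt (lt_of_le_of_lt (le_max_left N 1) hn))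
    rw [Real.dist_eq, sub_zero, abs_of_nonneg (Real.rpow_nonneg hm1.le _)] at this
    exact this.le
  have h2p : (0:ℝ) < 2 ^ p' := Real.rpow_pos_of_pos two_pos _
  calc ((n:ℝ) - 1) ^ (-q) = ((n:ℝ) - 1) ^ (-p') * ((n:ℝ) - 1) ^ (p' - q) := hsplit
    _ ≤ (2 ^ p' * (n:ℝ) ^ (-p')) * (ε / 2 ^ p') := by
        apply mul_le_mul hb hd (Real.rpow_nonneg hm1.le _)
        positivity
    _ = ε * (n:ℝ) ^ (-p') := by field_simp

private lemma frac_le {X ε : ℝ} (hX : 0 ≤ X) (hε : 0 ≤ ε) (c : ℝ) (hc : 0 < c) :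
    X * (ε / (c * (X + 1))) ≤ ε / c := by
  have h1 : X * (ε / (c * (X + 1))) ≤ (X + 1) * (ε / (c * (X + 1))) :=
    mul_le_mul_of_nonneg_right (by linarith) (by positivity)
  have h2 : (X + 1) * (ε / (c * (X + 1))) = ε / c := by field_simp
  linarith

private lemma m_pow_atTop {p : ℝ} (hp1 : p < 1) (K : ℝ) :
    ∃ N : ℕ, ∀ n : ℕ, n > N → K ≤ (n:ℝ) ^ (-p) * ((n:ℝ) - 1) := by
  have htop : Tendsto (fun n : ℕ => (n:ℝ) ^ (1 - p)) atTop atTop :=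
    (tendsto_rpow_atTop (by linarith)).comp tendsto_natCast_atTop_atTop
  obtain ⟨N, hN⟩ := Filter.eventually_atTop.mp (htop.eventually_ge_atTop (2 * K))
  refine ⟨max N 1, fun n hn => ?_⟩
  have hn2 : 2 ≤ n := by
    have := lt_of_le_of_lt (le_max_right N 1) hn
    omega
  have hm : (2:ℝ) ≤ (n:ℝ) := by exact_mod_cast hn2
  have hm0 : (0:ℝ) < (n:ℝ) := by linarith
  have hid : (n:ℝ) ^ (1 - p) = (n:ℝ) * (n:ℝ) ^ (-p) := by
    rw [show (1:ℝ) - p = 1 + -p by ring, Real.rpow_add hm0, Real.rpow_one]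
  have h1 := hN n (le_of_lt (lt_of_le_of_lt (le_max_left N 1) hn))
  have hap : (0:ℝ) < (n:ℝ) ^ (-p) := Real.rpow_pos_of_pos hm0 _
  nlinarith [mul_nonneg hap.le (show (0:ℝ) ≤ (n:ℝ)/2 - 1 by linarith)]

set_option maxHeartbeats 1600000 in
private lemma step_i {I : Set ℝ} {p : ℝ} (hp0 : 0 < p) {M : ℕ} {ψ : ℕ → ℝ → ℝ}
    {s : ℕ → ℝ} {φ : ℕ → ℝ → ℝ}
    (hs0 : s 0 = p) (hs : ∀ k, 1 ≤ k → k ≤ M → p < s k ∧ s k ≤ p + 1)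
    (hφ : LittleOI I
      (fun n t => φ n t - ∑ k ∈ Finset.range (M + 1), ψ k t * (n : ℝ) ^ (-(s k)))
      (fun n => (n : ℝ) ^ (-p - 1)))
    (Cm : ℕ → ℝ) (hCm0 : ∀ k, 0 ≤ Cm k) (hCm : ∀ k, ∀ t ∈ I, k ≤ M → |ψ k t| ≤ Cm k)
    (Ct : ℝ) (hCt : Ct = ∑ k ∈ Finset.range (M + 1), Cm k)
    {ε : ℝ} (hε : 0 < ε) :
    ∃ N : ℕ, ∀ n : ℕ, n > N → ∀ t ∈ I,
      |φ n t - ψ 0 t * (n : ℝ) ^ (-p)| ≤ ε * (n : ℝ) ^ (-p) := by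
  have hCt0 : 0 ≤ Ct := hCt ▸ Finset.sum_nonneg fun k _ => hCm0 k
  obtain ⟨N0, hN0⟩ := hφ (ε / 2) (by linarith)
  set ε' : ℝ := ε / (2 * (Ct + 1)) with hε'
  have hε'pos : 0 < ε' := by positivity
  have hev : ∀ k : ℕ, ∃ Nk : ℕ, ∀ n : ℕ, n > Nk → k < M →
      ((n:ℝ) - 1) ^ (-(s (k + 1))) ≤ ε' * (n:ℝ) ^ (-p) := by
    intro k
    by_cases hk : k < M
    · obtain ⟨Nk, hNk⟩ := aux_ev hp0.le (hs (k + 1) (by omega) (by omega)).1 hε'pos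
      exact ⟨Nk, fun n hn _ => hNk n hn⟩
    · exact ⟨0, fun n _ hk' => absurd hk' hk⟩
  choose Nf hNf using hev
  refine ⟨N0 + (Finset.range M).sup Nf + 1, fun n hn t ht => ?_⟩
  have hn2 : 2 ≤ n := by omega
  have hm : (2:ℝ) ≤ (n:ℝ) := by exact_mod_cast hn2
  have hm0 : (0:ℝ) < (n:ℝ) := by linarith
  have hm1 : (0:ℝ) < (n:ℝ) - 1 := by linarith
  have hnp : (0:ℝ) < (n:ℝ) ^ (-p) := Real.rpow_pos_of_pos hm0 _
  -- remainder bound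
  have hr := hN0 n (by omega) t ht
  simp only [abs_of_nonneg (Real.rpow_nonneg hm0.le (-p - 1))] at hr
  have hpp : (n:ℝ) ^ (-p - 1) ≤ (n:ℝ) ^ (-p) :=
    Real.rpow_le_rpow_of_exponent_le (by linarith) (by linarith)
  have hrem : |φ n t - ∑ k ∈ Finset.range (M + 1), ψ k t * (n : ℝ) ^ (-(s k))|
      ≤ ε / 2 * (n:ℝ) ^ (-p) := by
    calc |φ n t - ∑ k ∈ Finset.range (M + 1), ψ k t * (n : ℝ) ^ (-(s k))|
        ≤ ε / 2 * (n:ℝ) ^ (-p - 1) := hr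
      _ ≤ ε / 2 * (n:ℝ) ^ (-p) := by
          apply mul_le_mul_of_nonneg_left hpp (by linarith)
  -- tail sum bound
  have hterm : ∀ k ∈ Finset.range M,
      |ψ (k + 1) t * (n:ℝ) ^ (-(s (k + 1)))| ≤ Cm (k + 1) * (ε' * (n:ℝ) ^ (-p)) := by
    intro k hk
    have hkM := Finset.mem_range.mp hk
    rw [abs_mul]
    have hsk := hs (k + 1) (by omega) (by omega)
    have h1 : |ψ (k + 1) t| ≤ Cm (k + 1) := hCm (k + 1) t ht (by omega)
    have h2 : |(n:ℝ) ^ (-(s (k + 1)))| ≤ ε' * (n:ℝ) ^ (-p) := by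
      rw [abs_of_nonneg (Real.rpow_nonneg hm0.le _)]
      calc (n:ℝ) ^ (-(s (k + 1))) ≤ ((n:ℝ) - 1) ^ (-(s (k + 1))) :=
            rpow_base_antitone hm1 (by linarith) (by linarith [hsk.1, hp0])
        _ ≤ ε' * (n:ℝ) ^ (-p) :=
            hNf k n (by
              have := Finset.le_sup (f := Nf) hk
              omega) hkM
    exact mul_le_mul h1 h2 (abs_nonneg _) (hCm0 _)
  have hCtsum : ∑ k ∈ Finset.range M, Cm (k + 1) ≤ Ct := by
    rw [hCt, Finset.sum_range_succ']
    linarith [hCm0 0]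
  have htail : |∑ k ∈ Finset.range M, ψ (k + 1) t * (n:ℝ) ^ (-(s (k + 1)))|
      ≤ ε / 2 * (n:ℝ) ^ (-p) := by
    calc |∑ k ∈ Finset.range M, ψ (k + 1) t * (n:ℝ) ^ (-(s (k + 1)))|
        ≤ ∑ k ∈ Finset.range M, |ψ (k + 1) t * (n:ℝ) ^ (-(s (k + 1)))| :=
          Finset.abs_sum_le_sum_abs _ _
      _ ≤ ∑ k ∈ Finset.range M, Cm (k + 1) * (ε' * (n:ℝ) ^ (-p)) :=
          Finset.sum_le_sum hterm
      _ = (∑ k ∈ Finset.range M, Cm (k + 1)) * (ε' * (n:ℝ) ^ (-p)) := by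
          rw [Finset.sum_mul]
      _ ≤ Ct * (ε' * (n:ℝ) ^ (-p)) := by
          apply mul_le_mul_of_nonneg_right hCtsum (by positivity)
      _ = (Ct * ε') * (n:ℝ) ^ (-p) := by ring
      _ ≤ ε / 2 * (n:ℝ) ^ (-p) := by
          apply mul_le_mul_of_nonneg_right _ hnp.le
          have := frac_le hCt0 hε.le 2 two_pos
          rw [hε']
          linarith
  -- decomposition
  have hsum : (∑ k ∈ Finset.range (M + 1), ψ k t * (n:ℝ) ^ (-(s k)))
      = (∑ k ∈ Finset.range M, ψ (k + 1) t * (n:ℝ) ^ (-(s (k + 1)))) +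
        ψ 0 t * (n:ℝ) ^ (-p) := by
    rw [Finset.sum_range_succ', hs0]
  have hdecomp : φ n t - ψ 0 t * (n:ℝ) ^ (-p)
      = (φ n t - ∑ k ∈ Finset.range (M + 1), ψ k t * (n : ℝ) ^ (-(s k)))
        + ∑ k ∈ Finset.range M, ψ (k + 1) t * (n:ℝ) ^ (-(s (k + 1))) := by
    rw [hsum]; ring
  calc |φ n t - ψ 0 t * (n:ℝ) ^ (-p)|
      ≤ |φ n t - ∑ k ∈ Finset.range (M + 1), ψ k t * (n : ℝ) ^ (-(s k))|
        + |∑ k ∈ Finset.range M, ψ (k + 1) t * (n:ℝ) ^ (-(s (k + 1)))| := by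
        rw [hdecomp]; exact abs_add_le _ _
    _ ≤ ε * (n:ℝ) ^ (-p) := by linarith

set_option maxHeartbeats 1600000 in
private lemma step_ii {I : Set ℝ} {p : ℝ} (hp0 : 0 < p) (hp1 : p < 1) {M : ℕ}
    {ψ : ℕ → ℝ → ℝ} {s : ℕ → ℝ} {φ : ℕ → ℝ → ℝ}
    (hs0 : s 0 = p) (hs : ∀ k, 1 ≤ k → k ≤ M → p < s k ∧ s k ≤ p + 1)
    (hφ : LittleOI I
      (fun n t => φ n t - ∑ k ∈ Finset.range (M + 1), ψ k t * (n : ℝ) ^ (-(s k)))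
      (fun n => (n : ℝ) ^ (-p - 1)))
    (Cm : ℕ → ℝ) (hCm0 : ∀ k, 0 ≤ Cm k) (hCm : ∀ k, ∀ t ∈ I, k ≤ M → |ψ k t| ≤ Cm k)
    (Ct : ℝ) (hCt : Ct = ∑ k ∈ Finset.range (M + 1), Cm k)
    {ε : ℝ} (hε : 0 < ε) :
    ∃ N : ℕ, ∀ n : ℕ, n > N → ∀ t ∈ I,
      |φ n t - φ (n - 1) t + p * ψ 0 t * (n : ℝ) ^ (-p - 1)| ≤ ε * (n : ℝ) ^ (-p - 1) := by
  have hCt0 : 0 ≤ Ct := hCt ▸ Finset.sum_nonneg fun k _ => hCm0 k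
  obtain ⟨N0, hN0⟩ := hφ (ε / 20) (by linarith)
  set ε₀ : ℝ := ε / (4 * (Cm 0 * (p * (p + 1)) + 1)) with hε₀def
  have hX0 : 0 ≤ Cm 0 * (p * (p + 1)) := by
    have := hCm0 0; positivity
  have hε₀pos : 0 < ε₀ := by
    rw [hε₀def]; positivity
  obtain ⟨Na, hNa⟩ := aux_ev (show (0:ℝ) ≤ p + 1 by linarith)
    (show p + 1 < p + 2 by linarith) hε₀pos
  set ε₂ : ℝ := ε / (8 * (Ct + 1)) with hε₂def
  have hε₂pos : 0 < ε₂ := by rw [hε₂def]; positivity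
  have hev : ∀ k : ℕ, ∃ Nk : ℕ, ∀ n : ℕ, n > Nk → k < M →
      ((n:ℝ) - 1) ^ (-(s (k + 1) + 1)) ≤ ε₂ * (n:ℝ) ^ (-(p + 1)) := by
    intro k
    by_cases hk : k < M
    · obtain ⟨Nk, hNk⟩ := aux_ev (show (0:ℝ) ≤ p + 1 by linarith)
        (show p + 1 < s (k + 1) + 1 by linarith [(hs (k + 1) (by omega) (by omega)).1]) hε₂pos
      exact ⟨Nk, fun n hn _ => hNk n hn⟩
    · exact ⟨0, fun n _ hk' => absurd hk' hk⟩
  choose Nf hNf using hev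
  refine ⟨N0 + Na + (Finset.range M).sup Nf + 1, fun n hn t ht => ?_⟩
  have hn2 : 2 ≤ n := by omega
  have hm : (2:ℝ) ≤ (n:ℝ) := by exact_mod_cast hn2
  have hm0 : (0:ℝ) < (n:ℝ) := by linarith
  have hm1 : (0:ℝ) < (n:ℝ) - 1 := by linarith
  have hxp : (0:ℝ) < (n:ℝ) ^ (-p - 1) := Real.rpow_pos_of_pos hm0 _
  have hcast : ((n - 1 : ℕ) : ℝ) = (n:ℝ) - 1 := by
    rw [Nat.cast_sub (by omega : 1 ≤ n), Nat.cast_one]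
  -- remainder bounds
  have hr1 := hN0 n (by omega) t ht
  have hr2 := hN0 (n - 1) (by omega) t ht
  simp only at hr1 hr2
  rw [abs_of_nonneg (Real.rpow_nonneg hm0.le (-p - 1))] at hr1
  rw [hcast, abs_of_nonneg (Real.rpow_nonneg hm1.le (-p - 1))] at hr2
  have hfour : ((n:ℝ) - 1) ^ (-p - 1) ≤ 4 * (n:ℝ) ^ (-p - 1) := by
    have := four_bound (show (0:ℝ) < p + 1 by linarith) (by linarith) hm
    rwa [show -(p + 1) = -p - 1 by ring] at this
  have hr2' : |φ (n - 1) t - ∑ k ∈ Finset.range (M + 1), ψ k t * ((n:ℝ) - 1) ^ (-(s k))|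
      ≤ ε / 5 * (n:ℝ) ^ (-p - 1) := by
    calc |φ (n - 1) t - ∑ k ∈ Finset.range (M + 1), ψ k t * ((n:ℝ) - 1) ^ (-(s k))|
        ≤ ε / 20 * (((n:ℝ) - 1) ^ (-p - 1)) := hr2
      _ ≤ ε / 20 * (4 * (n:ℝ) ^ (-p - 1)) := by
          apply mul_le_mul_of_nonneg_left hfour (by linarith)
      _ = ε / 5 * (n:ℝ) ^ (-p - 1) := by ring
  -- main term bound
  have hmvt0 := mvt_rpow hp0 hm
  have hmvt1 := mvt_rpow (show (0:ℝ) < p + 1 by linarith) hm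
  rw [show -(p + 1) = -p - 1 by ring, show -p - 1 - 1 = -p - 2 by ring] at hmvt1
  have hmono : (n:ℝ) ^ (-p - 1) ≤ ((n:ℝ) - 1) ^ (-p - 1) := by
    have := rpow_base_antitone hm1 (by linarith : (n:ℝ) - 1 ≤ (n:ℝ))
      (show (0:ℝ) ≤ p + 1 by linarith)
    rwa [show -(p + 1) = -p - 1 by ring] at this
  have hmain0 : |(n:ℝ) ^ (-p) - ((n:ℝ) - 1) ^ (-p) + p * (n:ℝ) ^ (-p - 1)|
      ≤ p * (p + 1) * ((n:ℝ) - 1) ^ (-p - 2) := by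
    have habs : |(n:ℝ) ^ (-p) - ((n:ℝ) - 1) ^ (-p) + p * (n:ℝ) ^ (-p - 1)|
        ≤ p * (((n:ℝ) - 1) ^ (-p - 1)) - p * ((n:ℝ) ^ (-p - 1)) := by
      apply abs_le.mpr
      constructor
      · nlinarith [hmvt0.2]
      · nlinarith [hmvt0.1, mul_le_mul_of_nonneg_left hmono hp0.le]
    nlinarith [hmvt1.2, hp0]
  have hNa' := hNa n (by omega)
  rw [show -(p + 2) = -p - 2 by ring, show -(p + 1) = -p - 1 by ring] at hNa'
  have hψ0 : |ψ 0 t| ≤ Cm 0 := hCm 0 t ht (by omega)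
  have hmainb : |ψ 0 t * ((n:ℝ) ^ (-p) - ((n:ℝ) - 1) ^ (-p) + p * (n:ℝ) ^ (-p - 1))|
      ≤ ε / 4 * (n:ℝ) ^ (-p - 1) := by
    rw [abs_mul]
    calc |ψ 0 t| * |(n:ℝ) ^ (-p) - ((n:ℝ) - 1) ^ (-p) + p * (n:ℝ) ^ (-p - 1)|
        ≤ Cm 0 * (p * (p + 1) * ((n:ℝ) - 1) ^ (-p - 2)) :=
          mul_le_mul hψ0 hmain0 (abs_nonneg _) (hCm0 0)
      _ ≤ Cm 0 * (p * (p + 1) * (ε₀ * (n:ℝ) ^ (-p - 1))) := by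
          apply mul_le_mul_of_nonneg_left _ (hCm0 0)
          apply mul_le_mul_of_nonneg_left hNa' (by positivity)
      _ = (Cm 0 * (p * (p + 1))) * ε₀ * (n:ℝ) ^ (-p - 1) := by ring
      _ ≤ ε / 4 * (n:ℝ) ^ (-p - 1) := by
          apply mul_le_mul_of_nonneg_right _ hxp.le
          have := frac_le hX0 hε.le 4 (by norm_num)
          rw [hε₀def]
          linarith
  -- tail sum bound
  have hterm : ∀ k ∈ Finset.range M,
      |ψ (k + 1) t * ((n:ℝ) ^ (-(s (k + 1))) - ((n:ℝ) - 1) ^ (-(s (k + 1))))|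
        ≤ Cm (k + 1) * (2 * ε₂ * (n:ℝ) ^ (-p - 1)) := by
    intro k hk
    have hkM := Finset.mem_range.mp hk
    have hsk := hs (k + 1) (by omega) (by omega)
    have hsk0 : 0 < s (k + 1) := lt_trans hp0 hsk.1
    have hmvtk := mvt_rpow hsk0 hm
    have hdiffnn : 0 ≤ ((n:ℝ) - 1) ^ (-(s (k + 1))) - (n:ℝ) ^ (-(s (k + 1))) :=
      sub_nonneg.mpr (rpow_base_antitone hm1 (by linarith) hsk0.le)
    have hNfk := hNf k n (by
      have := Finset.le_sup (f := Nf) hk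
      omega) hkM
    rw [abs_mul]
    have h2 : |(n:ℝ) ^ (-(s (k + 1))) - ((n:ℝ) - 1) ^ (-(s (k + 1)))|
        ≤ 2 * ε₂ * (n:ℝ) ^ (-p - 1) := by
      rw [abs_sub_comm, abs_of_nonneg hdiffnn]
      have hsb : ((n:ℝ) - 1) ^ (-s (k + 1) - 1) = ((n:ℝ) - 1) ^ (-(s (k + 1) + 1)) := by
        rw [show -s (k + 1) - 1 = -(s (k + 1) + 1) by ring]
      have hb : s (k + 1) * ((n:ℝ) - 1) ^ (-s (k + 1) - 1)
          ≤ 2 * (ε₂ * (n:ℝ) ^ (-(p + 1))) := by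
        rw [hsb]
        have hpos : (0:ℝ) ≤ ((n:ℝ) - 1) ^ (-(s (k + 1) + 1)) := Real.rpow_nonneg hm1.le _
        calc s (k + 1) * ((n:ℝ) - 1) ^ (-(s (k + 1) + 1))
            ≤ 2 * (((n:ℝ) - 1) ^ (-(s (k + 1) + 1))) := by
              apply mul_le_mul_of_nonneg_right _ hpos
              linarith [hsk.2]
          _ ≤ 2 * (ε₂ * (n:ℝ) ^ (-(p + 1))) := by
              apply mul_le_mul_of_nonneg_left hNfk (by norm_num)
      rw [show -(p + 1) = -p - 1 by ring] at hb
      calc ((n:ℝ) - 1) ^ (-(s (k + 1))) - (n:ℝ) ^ (-(s (k + 1)))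
          ≤ s (k + 1) * ((n:ℝ) - 1) ^ (-s (k + 1) - 1) := hmvtk.2
        _ ≤ 2 * ε₂ * (n:ℝ) ^ (-p - 1) := by linarith
    exact mul_le_mul (hCm (k + 1) t ht (by omega)) h2 (abs_nonneg _) (hCm0 _)
  have hCtsum : ∑ k ∈ Finset.range M, Cm (k + 1) ≤ Ct := by
    rw [hCt, Finset.sum_range_succ']
    linarith [hCm0 0]
  have htail : |∑ k ∈ Finset.range M,
      ψ (k + 1) t * ((n:ℝ) ^ (-(s (k + 1))) - ((n:ℝ) - 1) ^ (-(s (k + 1))))|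
      ≤ ε / 4 * (n:ℝ) ^ (-p - 1) := by
    calc |∑ k ∈ Finset.range M,
        ψ (k + 1) t * ((n:ℝ) ^ (-(s (k + 1))) - ((n:ℝ) - 1) ^ (-(s (k + 1))))|
        ≤ ∑ k ∈ Finset.range M,
          |ψ (k + 1) t * ((n:ℝ) ^ (-(s (k + 1))) - ((n:ℝ) - 1) ^ (-(s (k + 1))))| :=
          Finset.abs_sum_le_sum_abs _ _
      _ ≤ ∑ k ∈ Finset.range M, Cm (k + 1) * (2 * ε₂ * (n:ℝ) ^ (-p - 1)) :=
          Finset.sum_le_sum hterm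
      _ = (∑ k ∈ Finset.range M, Cm (k + 1)) * (2 * ε₂ * (n:ℝ) ^ (-p - 1)) := by
          rw [Finset.sum_mul]
      _ ≤ Ct * (2 * ε₂ * (n:ℝ) ^ (-p - 1)) := by
          apply mul_le_mul_of_nonneg_right hCtsum (by positivity)
      _ = (Ct * (2 * ε₂)) * (n:ℝ) ^ (-p - 1) := by ring
      _ ≤ ε / 4 * (n:ℝ) ^ (-p - 1) := by
          apply mul_le_mul_of_nonneg_right _ hxp.le
          have := frac_le hCt0 hε.le 4 (by norm_num)
          have hCtne : Ct + 1 ≠ 0 := by linarith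
          have heq : Ct * (2 * ε₂) = Ct * (ε / (4 * (Ct + 1))) := by
            rw [hε₂def]; field_simp; ring
          rw [heq]
          linarith
  -- decomposition identity
  have e1 : ∑ k ∈ Finset.range (M + 1), ψ k t * (n:ℝ) ^ (-(s k))
      = (∑ k ∈ Finset.range M, ψ (k + 1) t * (n:ℝ) ^ (-(s (k + 1)))) +
        ψ 0 t * (n:ℝ) ^ (-p) := by
    rw [Finset.sum_range_succ', hs0]
  have e2 : ∑ k ∈ Finset.range (M + 1), ψ k t * ((n:ℝ) - 1) ^ (-(s k))
      = (∑ k ∈ Finset.range M, ψ (k + 1) t * ((n:ℝ) - 1) ^ (-(s (k + 1)))) +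
        ψ 0 t * ((n:ℝ) - 1) ^ (-p) := by
    rw [Finset.sum_range_succ', hs0]
  have hId : φ n t - φ (n - 1) t + p * ψ 0 t * (n:ℝ) ^ (-p - 1)
      = (φ n t - ∑ k ∈ Finset.range (M + 1), ψ k t * (n : ℝ) ^ (-(s k)))
        - (φ (n - 1) t - ∑ k ∈ Finset.range (M + 1), ψ k t * ((n:ℝ) - 1) ^ (-(s k)))
        + ψ 0 t * ((n:ℝ) ^ (-p) - ((n:ℝ) - 1) ^ (-p) + p * (n:ℝ) ^ (-p - 1))
        + ∑ k ∈ Finset.range M,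
            ψ (k + 1) t * ((n:ℝ) ^ (-(s (k + 1))) - ((n:ℝ) - 1) ^ (-(s (k + 1)))) := by
    simp only [mul_sub, Finset.sum_sub_distrib, e1, e2]
    ring
  rw [hId]
  have habs := abs_add_le
    ((φ n t - ∑ k ∈ Finset.range (M + 1), ψ k t * (n : ℝ) ^ (-(s k)))
      - (φ (n - 1) t - ∑ k ∈ Finset.range (M + 1), ψ k t * ((n:ℝ) - 1) ^ (-(s k)))
      + ψ 0 t * ((n:ℝ) ^ (-p) - ((n:ℝ) - 1) ^ (-p) + p * (n:ℝ) ^ (-p - 1)))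
    (∑ k ∈ Finset.range M,
      ψ (k + 1) t * ((n:ℝ) ^ (-(s (k + 1))) - ((n:ℝ) - 1) ^ (-(s (k + 1)))))
  have habs2 := abs_add_le
    ((φ n t - ∑ k ∈ Finset.range (M + 1), ψ k t * (n : ℝ) ^ (-(s k)))
      - (φ (n - 1) t - ∑ k ∈ Finset.range (M + 1), ψ k t * ((n:ℝ) - 1) ^ (-(s k))))
    (ψ 0 t * ((n:ℝ) ^ (-p) - ((n:ℝ) - 1) ^ (-p) + p * (n:ℝ) ^ (-p - 1)))
  have habs3 := abs_sub
    (φ n t - ∑ k ∈ Finset.range (M + 1), ψ k t * (n : ℝ) ^ (-(s k)))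
    (φ (n - 1) t - ∑ k ∈ Finset.range (M + 1), ψ k t * ((n:ℝ) - 1) ^ (-(s k)))
  linarith [mul_pos hε hxp]

set_option maxHeartbeats 1600000 in
private lemma assembly {p A σ m a b x u w g C ε δ : ℝ}
    (hσ : σ = 1 ∨ σ = -1)
    (hm : 2 ≤ m) (ha : 0 < a) (ha1 : a ≤ 1) (hx : 0 < x)
    (hax : a = m * x) (hab : a ≤ b) (hbd : b ≤ a + 4 * x)
    (hp : 0 < p) (hp1 : p ≤ 1)
    (hg : 0 < g) (hgC : g ≤ C)
    (hε : 0 ≤ ε) (hε1 : ε ≤ 1)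
    (h1 : |u - g * a| ≤ ε * a) (h1' : |w - g * b| ≤ ε * b)
    (h2 : |u - w + p * g * x| ≤ ε * x)
    (hδ : 0 < δ)
    (hlead : σ * (2 * A - p) * g ≤ -δ)
    (hCa : (C + 1) * (C + 1) * a ≤ δ / 4)
    (hCb : (1 + 2 * |A|) * ε ≤ δ / 4)
    (hCc : |A| * (C + 1) + |A| * (4 + 4 * C) + A ^ 2 + |A| ≤ δ / 2 * (a * (m - 1))) :
    (σ * u + A * m⁻¹) * (1 + (σ * w + A * (m - 1)⁻¹)) ≤
      (σ * w + A * (m - 1)⁻¹) + u ^ 2 := by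
  have hσ2 : σ * σ = 1 := by rcases hσ with rfl | rfl <;> norm_num
  have hσa : |σ| = 1 := by rcases hσ with rfl | rfl <;> norm_num
  have hm0 : (0:ℝ) < m := by linarith
  have hm1 : (0:ℝ) < m - 1 := by linarith
  have hm1' : (1:ℝ) ≤ m - 1 := by linarith
  set Y : ℝ := a * (m - 1) with hYdef
  have hY : 0 < Y := mul_pos ha hm1
  set T1 : ℝ := m * (m - 1) * (u - w) with hT1
  set e1 : ℝ := T1 + p * g * Y with he1def
  set e2 : ℝ := A * u * m - A * g * Y with he2def
  set e3 : ℝ := A * w * (m - 1) - A * g * Y with he3def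
  set e4 : ℝ := T1 * u with he4def
  have hC1 : (0:ℝ) < C + 1 := by linarith
  -- bound |e1|
  have he1eq : e1 = (m * (m - 1)) * (u - w + p * g * x) := by
    rw [he1def, hT1, hYdef, hax]; ring
  have he1 : |e1| ≤ ε * Y := by
    rw [he1eq, abs_mul, abs_of_pos (mul_pos hm0 hm1)]
    calc m * (m - 1) * |u - w + p * g * x| ≤ m * (m - 1) * (ε * x) := by
          exact mul_le_mul_of_nonneg_left h2 (mul_pos hm0 hm1).le
      _ = ε * Y := by rw [hYdef, hax]; ring
  -- bound |u|
  have hu : |u| ≤ (C + 1) * a := by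
    have := abs_sub_abs_le_abs_sub u (g * a)
    have hga : |g * a| = g * a := abs_of_pos (mul_pos hg ha)
    nlinarith [abs_nonneg u, h1]
  -- bound |T1|
  have hT1b : |T1| ≤ (C + 1) * Y := by
    have h' : |T1| ≤ |e1| + p * g * Y := by
      have : T1 = e1 - p * g * Y := by rw [he1def]; ring
      rw [this]
      calc |e1 - p * g * Y| ≤ |e1| + |p * g * Y| := abs_sub _ _
        _ = |e1| + p * g * Y := by
            rw [abs_of_nonneg (by positivity : (0:ℝ) ≤ p * g * Y)]
    have hpg : p * g ≤ C := by
      have := mul_le_mul_of_nonneg_right hp1 hg.le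
      linarith
    have hmul := mul_le_mul_of_nonneg_right (show ε + p * g ≤ C + 1 by linarith) hY.le
    have hexp : (ε + p * g) * Y = ε * Y + p * g * Y := by ring
    have hexp2 : (C + 1) * Y = (C + 1) * Y := rfl
    linarith [he1, hexp ▸ hmul]
  -- bound |e4|
  have he4 : |e4| ≤ δ / 4 * Y := by
    rw [he4def, abs_mul]
    calc |T1| * |u| ≤ ((C + 1) * Y) * ((C + 1) * a) :=
          mul_le_mul hT1b hu (abs_nonneg u) (by positivity)
      _ = ((C + 1) * (C + 1) * a) * Y := by ring
      _ ≤ δ / 4 * Y := mul_le_mul_of_nonneg_right hCa hY.le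
  -- bound |e2|
  have hum : |u * m - g * Y| ≤ ε * Y + (C + 1) * a := by
    have h5 : |u * (m - 1) - g * Y| ≤ ε * Y := by
      have : u * (m - 1) - g * Y = (u - g * a) * (m - 1) := by rw [hYdef]; ring
      rw [this, abs_mul, abs_of_pos hm1]
      calc |u - g * a| * (m - 1) ≤ (ε * a) * (m - 1) :=
            mul_le_mul_of_nonneg_right h1 hm1.le
        _ = ε * Y := by rw [hYdef]; ring
    have : u * m - g * Y = (u * (m - 1) - g * Y) + u := by ring
    rw [this]
    calc |(u * (m - 1) - g * Y) + u| ≤ |u * (m - 1) - g * Y| + |u| := abs_add_le _ _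
      _ ≤ ε * Y + (C + 1) * a := add_le_add h5 hu
  have he2 : |e2| ≤ |A| * (ε * Y) + |A| * ((C + 1) * a) := by
    have : e2 = A * (u * m - g * Y) := by rw [he2def]; ring
    rw [this, abs_mul]
    calc |A| * |u * m - g * Y| ≤ |A| * (ε * Y + (C + 1) * a) :=
          mul_le_mul_of_nonneg_left hum (abs_nonneg A)
      _ = |A| * (ε * Y) + |A| * ((C + 1) * a) := by ring
  -- bound |e3|
  have hwm : |w * (m - 1) - g * Y| ≤ ε * Y + 4 + 4 * C := by
    have hC0 : (0:ℝ) ≤ C := le_trans hg.le hgC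
    have hsplit : w * (m - 1) - g * Y = (w - g * b) * (m - 1) + g * (b - a) * (m - 1) := by
      rw [hYdef]; ring
    have hxm : x * (m - 1) ≤ a := by
      have hxe : x * (m - 1) = m * x - x := by ring
      rw [hax, hxe]; linarith
    have hbm : b * (m - 1) ≤ Y + 4 * a := by
      have h8 := mul_le_mul_of_nonneg_right hbd hm1.le
      have h9 : (a + 4 * x) * (m - 1) = Y + 4 * (x * (m - 1)) := by rw [hYdef]; ring
      linarith [h9.le, hxm]
    have hb1 : |(w - g * b) * (m - 1)| ≤ ε * Y + 4 := by
      rw [abs_mul, abs_of_pos hm1]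
      have h6 : |w - g * b| * (m - 1) ≤ ε * (b * (m - 1)) := by
        have h6a := mul_le_mul_of_nonneg_right h1' hm1.le
        have h6b : (ε * b) * (m - 1) = ε * (b * (m - 1)) := by ring
        linarith [h6b.le]
      have h7 : ε * (b * (m - 1)) ≤ ε * (Y + 4 * a) := mul_le_mul_of_nonneg_left hbm hε
      have hεa : ε * a ≤ 1 := mul_le_one₀ hε1 ha.le ha1
      have h7' : ε * (Y + 4 * a) = ε * Y + 4 * (ε * a) := by ring
      linarith [h7'.le]
    have hb2 : |g * (b - a) * (m - 1)| ≤ 4 * C := by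
      have hba : (0:ℝ) ≤ b - a := by linarith
      rw [abs_of_nonneg (by positivity : (0:ℝ) ≤ g * (b - a) * (m - 1))]
      have h10 : b - a ≤ 4 * x := by linarith
      have h11 : g * (b - a) ≤ C * (4 * x) := by
        apply mul_le_mul hgC h10 hba hC0
      have h12 := mul_le_mul_of_nonneg_right h11 hm1.le
      have h13 : C * (4 * x) * (m - 1) = 4 * C * (x * (m - 1)) := by ring
      have h14 : 4 * C * (x * (m - 1)) ≤ 4 * C * a :=
        mul_le_mul_of_nonneg_left hxm (by positivity)
      have h15 : 4 * C * a ≤ 4 * C * 1 := mul_le_mul_of_nonneg_left ha1 (by positivity)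
      linarith [h13.le]
    calc |w * (m - 1) - g * Y| = |(w - g * b) * (m - 1) + g * (b - a) * (m - 1)| := by
          rw [hsplit]
      _ ≤ |(w - g * b) * (m - 1)| + |g * (b - a) * (m - 1)| := abs_add_le _ _
      _ ≤ ε * Y + 4 + 4 * C := by linarith
  have he3 : |e3| ≤ |A| * (ε * Y) + |A| * (4 + 4 * C) := by
    have : e3 = A * (w * (m - 1) - g * Y) := by rw [he3def]; ring
    rw [this, abs_mul]
    calc |A| * |w * (m - 1) - g * Y| ≤ |A| * (ε * Y + 4 + 4 * C) :=
          mul_le_mul_of_nonneg_left hwm (abs_nonneg A)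
      _ = |A| * (ε * Y) + |A| * (4 + 4 * C) := by ring
  -- the main polynomial estimate
  set F : ℝ := σ * (T1 * (1 - σ * u)) + σ * (A * u * m) + σ * (A * w * (m - 1)) + A ^ 2 - A
    with hFdef
  have hFeq : F = σ * ((2 * A - p) * g) * Y + σ * e1 + σ * e2 + σ * e3 - e4 + A ^ 2 - A := by
    rw [hFdef, he1def, he2def, he3def, he4def, hT1]
    linear_combination (-(m * (m - 1) * (u - w) * u)) * hσ2
  have hF0 : F ≤ 0 := by
    rw [hFeq]
    have hl : σ * ((2 * A - p) * g) * Y ≤ -δ * Y := by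
      have := mul_le_mul_of_nonneg_right hlead hY.le
      nlinarith
    have hcb : (1 + 2 * |A|) * ε * Y ≤ δ / 4 * Y := mul_le_mul_of_nonneg_right hCb hY.le
    have hs1 : σ * e1 ≤ |e1| := by
      calc σ * e1 ≤ |σ * e1| := le_abs_self _
        _ = |e1| := by rw [abs_mul, hσa, one_mul]
    have hs2 : σ * e2 ≤ |e2| := by
      calc σ * e2 ≤ |σ * e2| := le_abs_self _
        _ = |e2| := by rw [abs_mul, hσa, one_mul]
    have hs3 : σ * e3 ≤ |e3| := by
      calc σ * e3 ≤ |σ * e3| := le_abs_self _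
        _ = |e3| := by rw [abs_mul, hσa, one_mul]
    have hAa : |A| * ((C + 1) * a) ≤ |A| * (C + 1) := by
      have : (C + 1) * a ≤ (C + 1) * 1 := mul_le_mul_of_nonneg_left ha1 hC1.le
      exact mul_le_mul_of_nonneg_left (by linarith) (abs_nonneg A)
    have hAabs : -A ≤ |A| := neg_le_abs A
    have he4' : -e4 ≤ δ / 4 * Y := by
      have := neg_le_abs e4; linarith [he4, neg_abs_le e4]
    linarith [he1, he2, he3, hs1, hs2, hs3]
  -- conclude by dividing by m (m - 1)
  have hmm : (0:ℝ) < m * (m - 1) := mul_pos hm0 hm1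
  have hid : (σ * u + A * m⁻¹) * (1 + (σ * w + A * (m - 1)⁻¹)) -
      ((σ * w + A * (m - 1)⁻¹) + u ^ 2) = F / (m * (m - 1)) := by
    rw [hFdef, hT1]
    rcases hσ with rfl | rfl <;> (field_simp; ring)
  have hdiv : F / (m * (m - 1)) ≤ 0 := div_nonpos_of_nonpos_of_nonneg hF0 hmm.le
  linarith [hid ▸ hdiv]

set_option maxHeartbeats 1600000 in
/-- Construction of uniform minorant sequences `v_n^± = ±φ_n + A^± n^{-1}`:
they satisfy `v_n^±(1 + v_{n-1}^±) ≤ v_{n-1}^± + φ_n²` for all `n > N`, uniformly on `I`. -/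
theorem uniform_minorant_sequences (I : Set ℝ) (p : ℝ) (hp0 : 0 < p) (hp1 : p < 1)
    (M : ℕ) (ψ : ℕ → ℝ → ℝ) (s : ℕ → ℝ) (φ : ℕ → ℝ → ℝ)
    (hs0 : s 0 = p)
    (hs : ∀ k, 1 ≤ k → k ≤ M → p < s k ∧ s k ≤ p + 1)
    (hψ0pos : ∃ c > (0 : ℝ), ∀ t ∈ I, c ≤ ψ 0 t)
    (hψbdd : ∀ k ≤ M, ∃ C : ℝ, ∀ t ∈ I, |ψ k t| ≤ C)
    (hφ : LittleOI I
      (fun n t => φ n t - ∑ k ∈ Finset.range (M + 1), ψ k t * (n : ℝ) ^ (-(s k)))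
      (fun n => (n : ℝ) ^ (-p - 1)))
    (Ap Am : ℝ) (hAp : Ap < p / 2) (hAm : p / 2 < Am) :
    ∃ N : ℕ, ∀ n > N, ∀ t ∈ I,
      (φ n t + Ap * (n : ℝ)⁻¹) * (1 + (φ (n - 1) t + Ap * ((n : ℝ) - 1)⁻¹)) ≤
        (φ (n - 1) t + Ap * ((n : ℝ) - 1)⁻¹) + (φ n t) ^ 2 ∧
      (-φ n t + Am * (n : ℝ)⁻¹) * (1 + (-φ (n - 1) t + Am * ((n : ℝ) - 1)⁻¹)) ≤
        (-φ (n - 1) t + Am * ((n : ℝ) - 1)⁻¹) + (φ n t) ^ 2 := by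
  classical
  obtain ⟨c, hc, hcle⟩ := hψ0pos
  have hbdd : ∀ k : ℕ, ∃ Ck : ℝ, 0 ≤ Ck ∧ ∀ t ∈ I, k ≤ M → |ψ k t| ≤ Ck := by
    intro k
    by_cases hk : k ≤ M
    · obtain ⟨Ck, hCk⟩ := hψbdd k hk
      exact ⟨max Ck 0, le_max_right _ _, fun t ht _ => le_trans (hCk t ht) (le_max_left _ _)⟩
    · exact ⟨0, le_rfl, fun t _ h => absurd h hk⟩
  choose Cm hCm' using hbdd
  have hCm0 : ∀ k, 0 ≤ Cm k := fun k => (hCm' k).1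
  have hCm : ∀ k, ∀ t ∈ I, k ≤ M → |ψ k t| ≤ Cm k := fun k => (hCm' k).2
  set Ct : ℝ := ∑ k ∈ Finset.range (M + 1), Cm k with hCtdef
  have hCt0 : 0 ≤ Ct := Finset.sum_nonneg fun k _ => hCm0 k
  set C : ℝ := Ct + 1 with hCdef
  have hC1 : (1:ℝ) ≤ C := by rw [hCdef]; linarith
  have hC0 : (0:ℝ) < C := by linarith
  have hCm0le : Cm 0 ≤ Ct := by
    rw [hCtdef]
    exact Finset.single_le_sum (f := Cm) (fun k _ => hCm0 k)
      (Finset.mem_range.mpr (Nat.succ_pos M))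
  have hgCle : ∀ t ∈ I, ψ 0 t ≤ C := fun t ht =>
    le_trans (le_trans (le_abs_self _) (hCm 0 t ht (Nat.zero_le M))) (by linarith)
  set KA : ℝ := |Ap| + |Am| + 1 with hKAdef
  have hKA0 : (0:ℝ) < KA := by
    have := abs_nonneg Ap; have := abs_nonneg Am; rw [hKAdef]; linarith
  have hApKA : |Ap| ≤ KA := by have := abs_nonneg Am; rw [hKAdef]; linarith
  have hAmKA : |Am| ≤ KA := by have := abs_nonneg Ap; rw [hKAdef]; linarith
  set δ : ℝ := min (c * (p - 2 * Ap)) (c * (2 * Am - p)) with hδdef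
  have hδ : 0 < δ := by
    rw [hδdef]
    exact lt_min (mul_pos hc (by linarith)) (mul_pos hc (by linarith))
  set ε : ℝ := min 1 (δ / 4 / (1 + 2 * KA)) with hεdef
  have hε : 0 < ε := by
    rw [hεdef]
    exact lt_min one_pos (by positivity)
  have hε1 : ε ≤ 1 := min_le_left _ _
  have hεb : (1 + 2 * KA) * ε ≤ δ / 4 := by
    have h := min_le_right 1 (δ / 4 / (1 + 2 * KA))
    calc (1 + 2 * KA) * ε ≤ (1 + 2 * KA) * (δ / 4 / (1 + 2 * KA)) :=
          mul_le_mul_of_nonneg_left (hεdef ▸ h) (by positivity)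
      _ = δ / 4 := by field_simp
  set Kbig : ℝ := KA * (C + 1) + KA * (4 + 4 * C) + KA ^ 2 + KA with hKbigdef
  have hKbig0 : 0 ≤ Kbig := by
    rw [hKbigdef]
    have h1 : 0 ≤ KA * (C + 1) := mul_nonneg hKA0.le (by linarith)
    have h2 : 0 ≤ KA * (4 + 4 * C) := mul_nonneg hKA0.le (by linarith)
    have h3 : 0 ≤ KA ^ 2 := sq_nonneg KA
    linarith
  obtain ⟨N1, hN1⟩ := step_i hp0 hs0 hs hφ Cm hCm0 hCm Ct hCtdef hε
  obtain ⟨N2, hN2⟩ := step_ii hp0 hp1 hs0 hs hφ Cm hCm0 hCm Ct hCtdef hε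
  obtain ⟨N3, hN3⟩ := aux_ev (le_refl (0:ℝ)) hp0
    (ε := δ / 4 / ((C + 1) * (C + 1))) (by positivity)
  obtain ⟨N4, hN4⟩ := m_pow_atTop hp1 (2 * Kbig / δ)
  refine ⟨N1 + N2 + N3 + N4 + 2, fun n hn t ht => ?_⟩
  have hn2 : 2 ≤ n := by omega
  have hm : (2:ℝ) ≤ (n:ℝ) := by exact_mod_cast hn2
  have hm0 : (0:ℝ) < (n:ℝ) := by linarith
  have hm1 : (0:ℝ) < (n:ℝ) - 1 := by linarith
  have hcast : ((n - 1 : ℕ) : ℝ) = (n:ℝ) - 1 := by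
    rw [Nat.cast_sub (by omega : 1 ≤ n), Nat.cast_one]
  have hg : 0 < ψ 0 t := lt_of_lt_of_le hc (hcle t ht)
  have hgC : ψ 0 t ≤ C := hgCle t ht
  have h1 := hN1 n (by omega) t ht
  have h1' := hN1 (n - 1) (by omega) t ht
  rw [hcast] at h1'
  have h2 := hN2 n (by omega) t ht
  have ha : (0:ℝ) < (n:ℝ) ^ (-p) := Real.rpow_pos_of_pos hm0 _
  have hx : (0:ℝ) < (n:ℝ) ^ (-p - 1) := Real.rpow_pos_of_pos hm0 _
  have hax : (n:ℝ) ^ (-p) = (n:ℝ) * (n:ℝ) ^ (-p - 1) := by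
    calc (n:ℝ) ^ (-p) = (n:ℝ) ^ (1 + (-p - 1)) := by
          rw [show (1:ℝ) + (-p - 1) = -p by ring]
      _ = (n:ℝ) * (n:ℝ) ^ (-p - 1) := by rw [Real.rpow_add hm0, Real.rpow_one]
  have hab : (n:ℝ) ^ (-p) ≤ ((n:ℝ) - 1) ^ (-p) :=
    rpow_base_antitone hm1 (by linarith) hp0.le
  have ha1 : (n:ℝ) ^ (-p) ≤ 1 := by
    have := rpow_base_antitone one_pos (by linarith : (1:ℝ) ≤ (n:ℝ)) hp0.le
    rwa [Real.one_rpow] at this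
  have hbd : ((n:ℝ) - 1) ^ (-p) ≤ (n:ℝ) ^ (-p) + 4 * (n:ℝ) ^ (-p - 1) := by
    have hmvt := mvt_rpow hp0 hm
    have hfour := four_bound (show (0:ℝ) < p + 1 by linarith) (by linarith) hm
    rw [show -(p + 1) = -p - 1 by ring] at hfour
    have hh := mul_le_mul_of_nonneg_left hfour hp0.le
    have hpx := mul_nonneg (show (0:ℝ) ≤ 1 - p by linarith) hx.le
    linarith [hmvt.2]
  have hCa : (C + 1) * (C + 1) * (n:ℝ) ^ (-p) ≤ δ / 4 := by
    have h3 := hN3 n (by omega)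
    rw [neg_zero, Real.rpow_zero, mul_one] at h3
    calc (C + 1) * (C + 1) * (n:ℝ) ^ (-p)
        ≤ (C + 1) * (C + 1) * (((n:ℝ) - 1) ^ (-p)) :=
          mul_le_mul_of_nonneg_left hab (by positivity)
      _ ≤ (C + 1) * (C + 1) * (δ / 4 / ((C + 1) * (C + 1))) :=
          mul_le_mul_of_nonneg_left h3 (by positivity)
      _ = δ / 4 := by field_simp
  have hYb : 2 * Kbig / δ ≤ (n:ℝ) ^ (-p) * ((n:ℝ) - 1) := hN4 n (by omega)
  have hKbY : Kbig ≤ δ / 2 * ((n:ℝ) ^ (-p) * ((n:ℝ) - 1)) := by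
    have h4 := mul_le_mul_of_nonneg_left hYb (show (0:ℝ) ≤ δ / 2 by linarith)
    have h5 : δ / 2 * (2 * Kbig / δ) = Kbig := by field_simp
    linarith [h5 ▸ h4]
  have hCcAp : |Ap| * (C + 1) + |Ap| * (4 + 4 * C) + Ap ^ 2 + |Ap|
      ≤ δ / 2 * ((n:ℝ) ^ (-p) * ((n:ℝ) - 1)) := by
    have hsq : Ap ^ 2 ≤ KA ^ 2 := by
      rw [← sq_abs Ap]
      exact pow_le_pow_left₀ (abs_nonneg _) hApKA 2
    have e1 : |Ap| * (C + 1) ≤ KA * (C + 1) := mul_le_mul_of_nonneg_right hApKA (by linarith)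
    have e2 : |Ap| * (4 + 4 * C) ≤ KA * (4 + 4 * C) :=
      mul_le_mul_of_nonneg_right hApKA (by linarith)
    exact le_trans (add_le_add (add_le_add (add_le_add e1 e2) hsq) hApKA)
      (le_of_le_of_eq (le_of_eq hKbigdef.symm) rfl |>.trans hKbY)
  have hCcAm : |Am| * (C + 1) + |Am| * (4 + 4 * C) + Am ^ 2 + |Am|
      ≤ δ / 2 * ((n:ℝ) ^ (-p) * ((n:ℝ) - 1)) := by
    have hsq : Am ^ 2 ≤ KA ^ 2 := by
      rw [← sq_abs Am]
      exact pow_le_pow_left₀ (abs_nonneg _) hAmKA 2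
    have e1 : |Am| * (C + 1) ≤ KA * (C + 1) := mul_le_mul_of_nonneg_right hAmKA (by linarith)
    have e2 : |Am| * (4 + 4 * C) ≤ KA * (4 + 4 * C) :=
      mul_le_mul_of_nonneg_right hAmKA (by linarith)
    exact le_trans (add_le_add (add_le_add (add_le_add e1 e2) hsq) hAmKA)
      (le_of_le_of_eq (le_of_eq hKbigdef.symm) rfl |>.trans hKbY)
  have hCbAp : (1 + 2 * |Ap|) * ε ≤ δ / 4 :=
    le_trans (mul_le_mul_of_nonneg_right (show 1 + 2 * |Ap| ≤ 1 + 2 * KA by linarith) hε.le) hεb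
  have hCbAm : (1 + 2 * |Am|) * ε ≤ δ / 4 :=
    le_trans (mul_le_mul_of_nonneg_right (show 1 + 2 * |Am| ≤ 1 + 2 * KA by linarith) hε.le) hεb
  have hleadp : (1:ℝ) * (2 * Ap - p) * ψ 0 t ≤ -δ := by
    have h := mul_le_mul_of_nonpos_left (hcle t ht) (show 2 * Ap - p ≤ 0 by linarith)
    have h6 : δ ≤ c * (p - 2 * Ap) := hδdef ▸ min_le_left _ _
    linarith
  have hleadm : (-1:ℝ) * (2 * Am - p) * ψ 0 t ≤ -δ := by
    have h := mul_le_mul_of_nonneg_left (hcle t ht) (show (0:ℝ) ≤ 2 * Am - p by linarith)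
    have h6 : δ ≤ c * (2 * Am - p) := hδdef ▸ min_le_right _ _
    linarith
  constructor
  · have := assembly (A := Ap) (Or.inl rfl) hm ha ha1 hx hax hab hbd hp0 hp1.le hg hgC
      hε.le hε1 h1 h1' h2 hδ hleadp hCa hCbAp hCcAp
    simpa using this
  · have := assembly (A := Am) (Or.inr rfl) hm ha ha1 hx hax hab hbd hp0 hp1.le hg hgC
      hε.le hε1 h1 h1' h2 hδ hleadm hCa hCbAm hCcAm
    simpa using this
end

section
/- Let I ⊂ ℝ, 0 < p < 1, and suppose (φ_n(λ)) satisfies φ_n(λ) = Σ_{k=0}^{M} ψ_k(λ)n^{-s_k} + õ_I(n^{-p-1}) with p = s₀ < s_k ≤ p+1, ψ₀ uniformly positive and bounded on I, and ψ_k bounded for k ≥ 1. Then for any real constants B⁻ < p/2 < B⁺ there exists N ∈ ℕ such that the sequences w_n^±(λ) := ±φ_n(λ) + B^± n^{-1} satisfy w_n^±(λ)·(1 + w_{n-1}^±(λ)) ≥ w_{n-1}^±(λ) + φ_n(λ)² for all n > N and all λ ∈ I. -/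
set_option maxHeartbeats 1000000

open Filter Real

lemma rpow_diff_bounds {q x : ℝ} (hq : 0 < q) (hx : 1 ≤ x) :
    q * (x+1) ^ (-q-1) ≤ x ^ (-q) - (x+1) ^ (-q) ∧
    x ^ (-q) - (x+1) ^ (-q) ≤ q * x ^ (-q-1) := by
  have hx0 : 0 < x := by linarith
  obtain ⟨ξ, hξ, hslope⟩ := exists_hasDerivAt_eq_slope (fun y => y ^ (-q))
    (fun y => (-q) * y ^ (-q-1)) (show x < x+1 by linarith)
    (by
      apply ContinuousOn.rpow_const continuousOn_id
      intro y hy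
      exact Or.inl (by simp only [id]; nlinarith [hy.1]))
    (fun y hy => by
      have hy0 : y ≠ 0 := by nlinarith [hy.1]
      simpa [sub_eq_add_neg, add_comm] using Real.hasDerivAt_rpow_const (p := -q) (Or.inl hy0))
  have hξ0 : 0 < ξ := lt_trans hx0 hξ.1
  have hslope' : x ^ (-q) - (x+1) ^ (-q) = q * ξ ^ (-q-1) := by
    have : (x + 1) - x = 1 := by ring
    rw [this, div_one] at hslope
    linarith [hslope]
  have h1 : ξ ^ (-q-1) ≤ x ^ (-q-1) :=
    Real.rpow_le_rpow_of_nonpos hx0 (le_of_lt hξ.1) (by linarith)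
  have h2 : (x+1) ^ (-q-1) ≤ ξ ^ (-q-1) :=
    Real.rpow_le_rpow_of_nonpos hξ0 (le_of_lt hξ.2) (by linarith)
  constructor
  · rw [hslope']; nlinarith
  · rw [hslope']; nlinarith


lemma eventually_ratio {q : ℝ} (hq0 : 0 < q) (hq2 : q ≤ 2) {ε : ℝ} (hε : 0 < ε) :
    ∀ᶠ n : ℕ in atTop, ((n:ℝ)-1) ^ (-q) ≤ (1+ε) * (n:ℝ) ^ (-q) := by
  filter_upwards [tendsto_natCast_atTop_atTop.eventually_ge_atTop (3/ε + 2)] with n hn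
  set z : ℝ := (n:ℝ) - 1 with hz
  have hε3 : 0 < 3/ε := by positivity
  have hz3 : 3/ε + 1 ≤ z := by simp only [hz]; linarith
  have hz1 : (1:ℝ) ≤ z := by linarith
  have hz0 : (0:ℝ) < z := by linarith
  have hzq : (0:ℝ) < z ^ q := Real.rpow_pos_of_pos hz0 q
  have hinv : 1/z ≤ ε/3 := by
    rw [div_le_div_iff₀ hz0 (by norm_num)]
    have h3 : 3/ε * ε = 3 := div_mul_cancel₀ (3:ℝ) (ne_of_gt hε)
    nlinarith [mul_le_mul_of_nonneg_right hz3 (le_of_lt hε)]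
  have hb1 : (1:ℝ) ≤ (z+1)/z := by rw [le_div_iff₀ hz0]; linarith
  have key : ((z+1)/z) ^ q ≤ 1 + ε := by
    calc ((z+1)/z) ^ q ≤ ((z+1)/z) ^ (2:ℝ) :=
          Real.rpow_le_rpow_of_exponent_le hb1 hq2
      _ = ((z+1)/z) ^ (2:ℕ) := by
          rw [show (2:ℝ) = ((2:ℕ):ℝ) by norm_num, Real.rpow_natCast]
      _ = (1 + 1/z)^2 := by rw [add_div, div_self (ne_of_gt hz0)]
      _ ≤ 1 + ε := by
          have h1z : 0 < 1/z := by positivity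
          have h1z1 : 1/z ≤ 1 := by rw [div_le_one hz0]; linarith
          nlinarith [hinv, hε, sq_nonneg (1/z)]
  have hdiv : ((z+1)/z) ^ q = (z+1)^q * z^(-q) := by
    rw [Real.div_rpow (by linarith) (le_of_lt hz0), Real.rpow_neg (le_of_lt hz0)]
    ring
  have hn1 : (n:ℝ) = z + 1 := by simp [hz]
  rw [hn1]
  have hz1q : (0:ℝ) < (z+1)^(-q) := Real.rpow_pos_of_pos (by linarith) _
  have : (z+1)^q * z^(-q) ≤ 1 + ε := by rw [← hdiv]; exact key
  have hmul : (z+1)^(-q) * ((z+1)^q * z^(-q)) ≤ (z+1)^(-q) * (1+ε) :=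
    mul_le_mul_of_nonneg_left this (le_of_lt hz1q)
  have hcanc : (z+1)^(-q) * (z+1)^q = 1 := by
    rw [← Real.rpow_add (by linarith)]; simp
  calc z ^ (-q) = (z+1)^(-q) * ((z+1)^q * z^(-q)) := by rw [← mul_assoc, hcanc, one_mul]
    _ ≤ (z+1)^(-q) * (1+ε) := hmul
    _ = (1+ε) * (z+1)^(-q) := by ring


lemma eventually_small {q : ℝ} (hq : 0 < q) {ε : ℝ} (hε : 0 < ε) :
    ∀ᶠ n : ℕ in atTop, ((n:ℝ)-1) ^ (-q) ≤ ε ∧ (n:ℝ) ^ (-q) ≤ ε := by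
  have h1 : Tendsto (fun n : ℕ => ((n:ℝ)-1)) atTop atTop := by
    simpa [sub_eq_add_neg] using
      tendsto_atTop_add_const_right atTop (-1:ℝ) tendsto_natCast_atTop_atTop
  have h2 := (tendsto_rpow_neg_atTop hq).comp h1
  have h3 := (tendsto_rpow_neg_atTop hq).comp (tendsto_natCast_atTop_atTop (R := ℝ))
  filter_upwards [h2.eventually_lt_const hε, h3.eventually_lt_const hε] with n ha hb
  exact ⟨le_of_lt ha, le_of_lt hb⟩


lemma key_plus {p c Bp u a b x y y' m m' ε : ℝ}
    (hc : 0 < c) (hu1 : c ≤ u) (hBp : p/2 < Bp) (hp : 0 < p)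
    (hε0 : 0 < ε) (hε1 : ε ≤ c/2) (hε2 : ε * (3 + 3*Bp) ≤ (2*Bp - p) * c)
    (hx : 0 < x) (hy : 0 < y) (hyy' : y ≤ y') (hm : 0 ≤ m) (hmm' : m ≤ m')
    (hym : y * m = x)
    (hdiff : m' - m ≤ ε * x)
    (ha : |a - u*y| ≤ ε*y) (hb : |b - u*y'| ≤ ε*y')
    (hba : |b - a - p*u*x| ≤ ε*x)
    (hab : |a*(b-a)| ≤ ε*x) :
    (a + Bp*m) * (1 + (b + Bp*m')) ≥ (b + Bp*m') + a^2 := by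
  have hBp0 : 0 < Bp := by linarith
  have hm' : 0 ≤ m' := le_trans hm hmm'
  obtain ⟨ha1, ha2⟩ := abs_le.mp ha
  obtain ⟨hb1, hb2⟩ := abs_le.mp hb
  obtain ⟨hba1, hba2⟩ := abs_le.mp hba
  obtain ⟨hab1, hab2⟩ := abs_le.mp hab
  have hue : 0 < u - ε := by linarith
  have haL : (u-ε)*y ≤ a := by linarith [ha1]
  have hbL : (u-ε)*y' ≤ b := by linarith [hb1]
  have hym' : x ≤ y * m' := by
    rw [← hym]; exact mul_le_mul_of_nonneg_left hmm' hy.le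
  have hy'm : y * m ≤ y' * m := mul_le_mul_of_nonneg_right hyy' hm
  have ham' : (u-ε)*x ≤ a*m' :=
    calc (u-ε)*x ≤ (u-ε)*(y*m') := mul_le_mul_of_nonneg_left hym' hue.le
      _ = ((u-ε)*y)*m' := by ring
      _ ≤ a*m' := mul_le_mul_of_nonneg_right haL hm'
  have hbm : (u-ε)*x ≤ b*m :=
    calc (u-ε)*x = (u-ε)*(y*m) := by rw [hym]
      _ ≤ (u-ε)*(y'*m) := mul_le_mul_of_nonneg_left hy'm hue.le
      _ = ((u-ε)*y')*m := by ring
      _ ≤ b*m := mul_le_mul_of_nonneg_right hbL hm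
  have t2 : Bp*(m'-m) ≤ Bp*(ε*x) := mul_le_mul_of_nonneg_left hdiff hBp0.le
  have t4a : Bp*((u-ε)*x) ≤ Bp*(a*m') := mul_le_mul_of_nonneg_left ham' hBp0.le
  have t4b : Bp*((u-ε)*x) ≤ Bp*(b*m) := mul_le_mul_of_nonneg_left hbm hBp0.le
  have t5 : (0:ℝ) ≤ Bp^2*(m*m') := by positivity
  have hA : ε*(3+3*Bp)*x ≤ ((2*Bp-p)*c)*x := mul_le_mul_of_nonneg_right hε2 hx.le
  have hB : ((2*Bp-p)*c)*x ≤ (2*Bp-p)*(u*x) := by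
    have h1 : c*x ≤ u*x := mul_le_mul_of_nonneg_right hu1 hx.le
    have h2 : (0:ℝ) ≤ 2*Bp - p := by linarith
    calc ((2*Bp-p)*c)*x = (2*Bp-p)*(c*x) := by ring
      _ ≤ (2*Bp-p)*(u*x) := mul_le_mul_of_nonneg_left h1 h2
  have hεx : 0 < ε*x := mul_pos hε0 hx
  linarith [t2, t4a, t4b, t5, hA, hB, hba2, hab1]


lemma key_minus {p c Cu Bm u a b x y y' m m' ε : ℝ}
    (hc : 0 < c) (hu1 : c ≤ u) (hu2 : u ≤ Cu) (hBm : Bm < p / 2) (hp : 0 < p)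
    (hε0 : 0 < ε) (hε1 : ε ≤ c/2) (hε4 : ε ≤ 1)
    (hε3 : ε * (3 + |Bm| + 2*(max Bm 0)*(Cu+2)) ≤ (p - 2*max Bm 0) * c)
    (hx : 0 < x) (hy : 0 < y) (hyy' : y ≤ y') (hm : 0 ≤ m) (hmm' : m ≤ m')
    (hym : y * m = x)
    (hym'U : y * m' ≤ (1+ε)*x) (hy'mU : y' * m ≤ (1+ε)*x)
    (hdiff : m' - m ≤ ε * x)
    (ha : |a - u*y| ≤ ε*y) (hb : |b - u*y'| ≤ ε*y')
    (hba : |b - a - p*u*x| ≤ ε*x)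
    (hab : |a*(b-a)| ≤ ε*x) :
    (-a + Bm*m) * (1 + (-b + Bm*m')) ≥ (-b + Bm*m') + a^2 := by
  set B := max Bm 0 with hB
  have hB0 : 0 ≤ B := le_max_right _ _
  have hBB : Bm ≤ B := le_max_left _ _
  have hm' : 0 ≤ m' := le_trans hm hmm'
  obtain ⟨ha1, ha2⟩ := abs_le.mp ha
  obtain ⟨hb1, hb2⟩ := abs_le.mp hb
  obtain ⟨hba1, hba2⟩ := abs_le.mp hba
  obtain ⟨hab1, hab2⟩ := abs_le.mp hab
  have hue : 0 < u - ε := by linarith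
  have hy' : 0 < y' := lt_of_lt_of_le hy hyy'
  have haL : 0 ≤ a := by
    have h := mul_nonneg hue.le hy.le; linarith
  have hbL : 0 ≤ b := by
    have h := mul_nonneg hue.le hy'.le; linarith
  have haU : a ≤ (u+ε)*y := by linarith
  have hbU : b ≤ (u+ε)*y' := by linarith
  have hue2 : 0 < u + ε := by linarith
  -- upper bounds on a*m', b*m
  have ham'U : a*m' ≤ (u+ε)*((1+ε)*x) :=
    calc a*m' ≤ ((u+ε)*y)*m' := mul_le_mul_of_nonneg_right haU hm'
      _ = (u+ε)*(y*m') := by ring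
      _ ≤ (u+ε)*((1+ε)*x) := mul_le_mul_of_nonneg_left hym'U hue2.le
  have hbmU : b*m ≤ (u+ε)*((1+ε)*x) :=
    calc b*m ≤ ((u+ε)*y')*m := mul_le_mul_of_nonneg_right hbU hm
      _ = (u+ε)*(y'*m) := by ring
      _ ≤ (u+ε)*((1+ε)*x) := mul_le_mul_of_nonneg_left hy'mU hue2.le
  have hP0 : 0 ≤ a*m' + b*m := by
    have := mul_nonneg haL hm'
    have := mul_nonneg hbL hm
    linarith
  -- -Bm * P ≥ -B * P ≥ -B * 2*(u+ε)*(1+ε)*x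
  have t4 : -(B*(2*((u+ε)*((1+ε)*x)))) ≤ -Bm*(a*m' + b*m) := by
    have h1 : Bm*(a*m'+b*m) ≤ B*(a*m'+b*m) := mul_le_mul_of_nonneg_right hBB hP0
    have h2 : B*(a*m'+b*m) ≤ B*(2*((u+ε)*((1+ε)*x))) := by
      apply mul_le_mul_of_nonneg_left _ hB0
      linarith
    linarith
  -- bound B*2*(u+ε)*(1+ε)*x ≤ 2*B*(u*x) + 2*B*(Cu+2)*(ε*x)
  have hexp : B*(2*((u+ε)*((1+ε)*x))) ≤ 2*B*(u*x) + 2*B*(Cu+2)*(ε*x) := by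
    have h3 : (2*B*ε*x)*(u+1+ε) ≤ (2*B*ε*x)*(Cu+2) := by
      apply mul_le_mul_of_nonneg_left (by linarith) (by positivity)
    linarith [h3]
  -- t2
  have t2 : |Bm| * (m'-m) ≤ |Bm| * (ε*x) := mul_le_mul_of_nonneg_left hdiff (abs_nonneg _)
  have t2' : -(|Bm| * (ε*x)) ≤ Bm*(m-m') := by
    have h1 : |Bm*(m'-m)| ≤ |Bm| * (m'-m) := by
      rw [abs_mul, abs_of_nonneg (by linarith : (0:ℝ) ≤ m'-m)]
    have h2 := le_abs_self (Bm*(m'-m))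
    linarith [h1, h2, t2]
  have t5 : (0:ℝ) ≤ Bm^2*(m*m') := by positivity
  -- final constants
  have hγ : 0 < p - 2*B := by
    rcases le_total Bm 0 with h | h
    · rw [hB, max_eq_right h]; linarith
    · rw [hB, max_eq_left h]; linarith
  have hA : ε*(3 + |Bm| + 2*B*(Cu+2))*x ≤ ((p-2*B)*c)*x :=
    mul_le_mul_of_nonneg_right hε3 hx.le
  have hBfin : ((p-2*B)*c)*x ≤ (p-2*B)*(u*x) := by
    have h1 : c*x ≤ u*x := mul_le_mul_of_nonneg_right hu1 hx.le
    calc ((p-2*B)*c)*x = (p-2*B)*(c*x) := by ring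
      _ ≤ (p-2*B)*(u*x) := mul_le_mul_of_nonneg_left h1 hγ.le
  have hεx : 0 < ε*x := mul_pos hε0 hx
  have habs : 0 ≤ |Bm| := abs_nonneg _
  linarith [t4, hexp, t2', t5, hA, hBfin, hba1, hab1,
    mul_le_mul_of_nonneg_left (le_refl (ε*x)) habs]

lemma lemL1 {I : Set ℝ} {p : ℝ} (hp0 : 0 < p) {M : ℕ} {ψ : ℕ → ℝ → ℝ} {s : ℕ → ℝ}
    {φ : ℕ → ℝ → ℝ} (hs0 : s 0 = p)
    (hs : ∀ k, 1 ≤ k → k ≤ M → p < s k ∧ s k ≤ p + 1)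
    {C : ℕ → ℝ} (hC : ∀ k ≤ M, ∀ t ∈ I, |ψ k t| ≤ C k) (hCnn : ∀ k, 0 ≤ C k)
    (hφ : LittleOI I
      (fun n t => φ n t - ∑ k ∈ Finset.range (M + 1), ψ k t * (n : ℝ) ^ (-(s k)))
      (fun n => (n : ℝ) ^ (-p - 1)))
    {δ : ℝ} (hδ : 0 < δ) :
    ∀ᶠ n : ℕ in atTop, ∀ t ∈ I, |φ n t - ψ 0 t * (n:ℝ) ^ (-p)| ≤ δ * (n:ℝ) ^ (-p) := by
  have hδ2 : 0 < δ/2 := by linarith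
  obtain ⟨N₀, hN₀⟩ := hφ (δ/2) hδ2
  have hδ' : 0 < δ/(2*(M+1)) := by positivity
  have htail : ∀ᶠ n : ℕ in atTop, ∀ k ∈ Finset.Icc 1 M,
      C k * (n:ℝ) ^ (-(s k - p)) ≤ δ/(2*(M+1)) := by
    rw [Filter.eventually_all_finset]
    intro k hk
    obtain ⟨hk1, hk2⟩ := Finset.mem_Icc.mp hk
    have hq : 0 < s k - p := by linarith [(hs k hk1 hk2).1]
    have hck : (0:ℝ) < C k + 1 := by linarith [hCnn k]
    have hd : 0 < δ/(2*(M+1)) / (C k + 1) := div_pos hδ' hck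
    filter_upwards [eventually_small hq hd] with n hn
    have h1 : C k * (n:ℝ) ^ (-(s k - p)) ≤ (C k + 1) * ((n:ℝ) ^ (-(s k - p))) := by
      have := Real.rpow_nonneg (by positivity : (0:ℝ) ≤ (n:ℝ)) (-(s k - p))
      nlinarith [hn.2]
    have h2 : (C k + 1) * ((n:ℝ) ^ (-(s k - p))) ≤ (C k + 1) * (δ/(2*(M+1)) / (C k + 1)) :=
      mul_le_mul_of_nonneg_left hn.2 (by linarith [hCnn k])
    have h3 : (C k + 1) * (δ/(2*(M+1)) / (C k + 1)) = δ/(2*(M+1)) := by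
      rw [mul_comm]; exact div_mul_cancel₀ _ (ne_of_gt hck)
    linarith
  filter_upwards [eventually_gt_atTop N₀, eventually_ge_atTop 1, htail] with n hn hn1 htl t ht
  have hn0 : (0:ℝ) < n := by exact_mod_cast hn1
  have hn1' : (1:ℝ) ≤ n := by exact_mod_cast hn1
  set r := fun (n : ℕ) (t : ℝ) => φ n t - ∑ k ∈ Finset.range (M + 1), ψ k t * (n : ℝ) ^ (-(s k)) with hr
  have hrb : |r n t| ≤ δ/2 * (n:ℝ) ^ (-p) := by
    have h1 := hN₀ n hn t ht
    have h2 : |(n:ℝ) ^ (-p-1)| = (n:ℝ) ^ (-p-1) :=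
      abs_of_nonneg (Real.rpow_nonneg hn0.le _)
    have h3 : (n:ℝ) ^ (-p-1) ≤ (n:ℝ) ^ (-p) :=
      Real.rpow_le_rpow_of_exponent_le hn1' (by linarith)
    rw [h2] at h1
    have h4 : δ/2 * (n:ℝ)^(-p-1) ≤ δ/2 * (n:ℝ)^(-p) :=
      mul_le_mul_of_nonneg_left h3 hδ2.le
    exact le_trans h1 h4
  have hsplit : φ n t - ψ 0 t * (n:ℝ) ^ (-p)
      = (∑ i ∈ Finset.range M, ψ (i+1) t * (n:ℝ) ^ (-(s (i+1)))) + r n t := by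
    have := Finset.sum_range_succ' (fun k => ψ k t * (n:ℝ) ^ (-(s k))) M
    simp only [hr]
    rw [this, hs0]
    ring
  have hsumb : |∑ i ∈ Finset.range M, ψ (i+1) t * (n:ℝ) ^ (-(s (i+1)))|
      ≤ δ/2 * (n:ℝ) ^ (-p) := by
    calc |∑ i ∈ Finset.range M, ψ (i+1) t * (n:ℝ) ^ (-(s (i+1)))|
        ≤ ∑ i ∈ Finset.range M, |ψ (i+1) t * (n:ℝ) ^ (-(s (i+1)))| :=
          Finset.abs_sum_le_sum_abs _ _
      _ ≤ ∑ i ∈ Finset.range M, δ/(2*(M+1)) * (n:ℝ) ^ (-p) := by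
          apply Finset.sum_le_sum
          intro i hi
          have hi' : i + 1 ∈ Finset.Icc 1 M := by
            simp only [Finset.mem_range] at hi
            exact Finset.mem_Icc.mpr ⟨by omega, by omega⟩
          have hiM : i + 1 ≤ M := by simp only [Finset.mem_range] at hi; omega
          have h1 : |ψ (i+1) t| ≤ C (i+1) := hC (i+1) hiM t ht
          have hrpos : (0:ℝ) ≤ (n:ℝ) ^ (-(s (i+1))) := Real.rpow_nonneg hn0.le _
          have hsp : (n:ℝ) ^ (-(s (i+1))) = (n:ℝ) ^ (-(s (i+1) - p)) * (n:ℝ) ^ (-p) := by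
            rw [← Real.rpow_add hn0]; ring_nf
          have h2 : |ψ (i+1) t * (n:ℝ) ^ (-(s (i+1)))| ≤ C (i+1) * (n:ℝ) ^ (-(s (i+1))) := by
            rw [abs_mul, abs_of_nonneg hrpos]
            exact mul_le_mul_of_nonneg_right h1 hrpos
          have h3 : C (i+1) * (n:ℝ) ^ (-(s (i+1)))
              = (C (i+1) * (n:ℝ) ^ (-(s (i+1) - p))) * (n:ℝ) ^ (-p) := by
            rw [hsp]; ring
          have h4 := htl (i+1) hi'
          have h5 : (C (i+1) * (n:ℝ) ^ (-(s (i+1) - p))) * (n:ℝ) ^ (-p)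
              ≤ δ/(2*(M+1)) * (n:ℝ) ^ (-p) :=
            mul_le_mul_of_nonneg_right h4 (Real.rpow_nonneg hn0.le _)
          linarith
      _ = M * (δ/(2*(M+1))) * (n:ℝ) ^ (-p) := by
          rw [Finset.sum_const, Finset.card_range]; push_cast; ring
      _ ≤ δ/2 * (n:ℝ) ^ (-p) := by
          apply mul_le_mul_of_nonneg_right _ (Real.rpow_nonneg hn0.le _)
          have hM : (0:ℝ) ≤ M := Nat.cast_nonneg M
          have hpos : (0:ℝ) < 2*((M:ℝ)+1) := by positivity
          have heq : (M:ℝ) * (δ / (2*((M:ℝ)+1))) = ((M:ℝ)*δ) / (2*((M:ℝ)+1)) :=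
            (mul_div_assoc _ _ _).symm
          rw [heq, div_le_div_iff₀ hpos two_pos]
          nlinarith
  calc |φ n t - ψ 0 t * (n:ℝ) ^ (-p)|
      = |(∑ i ∈ Finset.range M, ψ (i+1) t * (n:ℝ) ^ (-(s (i+1)))) + r n t| := by rw [hsplit]
    _ ≤ _ + _ := abs_add_le _ _
    _ ≤ δ/2 * (n:ℝ)^(-p) + δ/2 * (n:ℝ)^(-p) := add_le_add hsumb hrb
    _ = δ * (n:ℝ)^(-p) := by ring

lemma lemL2 {I : Set ℝ} {p : ℝ} (hp0 : 0 < p) (hp1 : p < 1) {M : ℕ} {ψ : ℕ → ℝ → ℝ} {s : ℕ → ℝ}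
    {φ : ℕ → ℝ → ℝ} (hs0 : s 0 = p)
    (hs : ∀ k, 1 ≤ k → k ≤ M → p < s k ∧ s k ≤ p + 1)
    {C : ℕ → ℝ} (hC : ∀ k ≤ M, ∀ t ∈ I, |ψ k t| ≤ C k) (hCnn : ∀ k, 0 ≤ C k)
    (hφ : LittleOI I
      (fun n t => φ n t - ∑ k ∈ Finset.range (M + 1), ψ k t * (n : ℝ) ^ (-(s k)))
      (fun n => (n : ℝ) ^ (-p - 1)))
    {δ : ℝ} (hδ : 0 < δ) :
    ∀ᶠ n : ℕ in atTop, ∀ t ∈ I,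
      |φ (n-1) t - φ n t - p * ψ 0 t * (n:ℝ) ^ (-p-1)| ≤ δ * (n:ℝ) ^ (-p-1) := by
  obtain ⟨N₀, hN₀⟩ := hφ (δ/8) (by linarith)
  have hCψ0 : 0 ≤ C 0 := hCnn 0
  set ε₁ : ℝ := min 1 (δ/(4*(C 0*p+1))) with hε₁def
  have hε₁pos : 0 < ε₁ := by
    apply lt_min one_pos
    have : 0 < C 0 * p + 1 := by nlinarith
    positivity
  have hq2 : p + 1 ≤ 2 := by linarith
  have hratio := eventually_ratio (by linarith : (0:ℝ) < p+1) hq2 hε₁pos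
  have htail : ∀ᶠ n : ℕ in atTop, ∀ k ∈ Finset.Icc 1 M,
      ((n:ℝ)-1) ^ (-(s k - p)) ≤ δ/(4*(M+1)*(2*(C k)*(p+1)+1)) := by
    rw [Filter.eventually_all_finset]
    intro k hk
    obtain ⟨hk1, hk2⟩ := Finset.mem_Icc.mp hk
    have hq : 0 < s k - p := by linarith [(hs k hk1 hk2).1]
    have hd : 0 < δ/(4*(M+1)*(2*(C k)*(p+1)+1)) := by
      have h1 : 0 < 2*(C k)*(p+1)+1 := by nlinarith [hCnn k]
      have h2 : (0:ℝ) < 4*((M:ℝ)+1) := by positivity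
      positivity
    filter_upwards [eventually_small hq hd] with n hn
    exact hn.1
  filter_upwards [eventually_gt_atTop (N₀+1), eventually_ge_atTop 2, hratio, htail]
    with n hn hn2 hrat htl t ht
  have hn1 : 1 ≤ n := by omega
  have hzc : ((n-1 : ℕ):ℝ) = (n:ℝ) - 1 := by
    push_cast [Nat.cast_sub hn1]; ring
  set z : ℝ := (n:ℝ) - 1 with hzdef
  have hz1 : (1:ℝ) ≤ z := by
    have : (2:ℝ) ≤ n := by exact_mod_cast hn2
    simp only [hzdef]; linarith
  have hz0 : (0:ℝ) < z := by linarith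
  have hn0 : (0:ℝ) < n := by linarith [hz1, show z = (n:ℝ)-1 from hzdef]
  have hzn : z + 1 = (n:ℝ) := by simp [hzdef]
  have hxpos : (0:ℝ) < (n:ℝ) ^ (-p-1) := Real.rpow_pos_of_pos hn0 _
  set x : ℝ := (n:ℝ) ^ (-p-1) with hxdef
  -- ratio in -p-1 form
  have hratx : z ^ (-p-1) ≤ (1+ε₁) * x := by
    have := hrat
    rw [show -(p+1) = -p-1 by ring] at this
    exact this
  have hrat2 : z ^ (-p-1) ≤ 2 * x := by
    have hε₁1 : ε₁ ≤ 1 := min_le_left _ _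
    nlinarith [hratx, hxpos]
  -- remainder bounds
  set r := fun (m : ℕ) (t : ℝ) => φ m t - ∑ k ∈ Finset.range (M + 1), ψ k t * (m : ℝ) ^ (-(s k)) with hrdef
  have hrn : |r n t| ≤ δ/8 * x := by
    have h1 := hN₀ n (by omega) t ht
    simpa [hxdef, abs_of_nonneg (Real.rpow_nonneg hn0.le (-p-1))] using h1
  have hrn1 : |r (n-1) t| ≤ δ/4 * x := by
    have h1 := hN₀ (n-1) (by omega) t ht
    simp only [hzc] at h1
    rw [abs_of_nonneg (Real.rpow_nonneg hz0.le (-p-1))] at h1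
    calc |r (n-1) t| ≤ δ/8 * z ^ (-p-1) := h1
      _ ≤ δ/8 * (2*x) := mul_le_mul_of_nonneg_left hrat2 (by linarith)
      _ = δ/4 * x := by ring
  -- split identity
  have hsplit : φ (n-1) t - φ n t - p * ψ 0 t * x
      = (ψ 0 t * (z ^ (-p) - (n:ℝ) ^ (-p)) - p * ψ 0 t * x)
        + (∑ i ∈ Finset.range M, ψ (i+1) t * (z ^ (-(s (i+1))) - (n:ℝ) ^ (-(s (i+1)))))
        + (r (n-1) t - r n t) := by
    have e1 : r (n-1) t = φ (n-1) t - ∑ k ∈ Finset.range (M+1), ψ k t * z ^ (-(s k)) := by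
      simp only [hrdef, hzc]
    have e2 : r n t = φ n t - ∑ k ∈ Finset.range (M+1), ψ k t * (n:ℝ) ^ (-(s k)) := rfl
    have e3 := Finset.sum_range_succ' (fun k => ψ k t * z ^ (-(s k))) M
    have e4 := Finset.sum_range_succ' (fun k => ψ k t * (n:ℝ) ^ (-(s k))) M
    have e5 : (∑ i ∈ Finset.range M, ψ (i+1) t * (z ^ (-(s (i+1))) - (n:ℝ) ^ (-(s (i+1)))))
        = (∑ i ∈ Finset.range M, ψ (i+1) t * z ^ (-(s (i+1))))
          - ∑ i ∈ Finset.range M, ψ (i+1) t * (n:ℝ) ^ (-(s (i+1))) := by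
      rw [← Finset.sum_sub_distrib]
      exact Finset.sum_congr rfl (fun i _ => by ring)
    rw [e1, e2, e3, e4, hs0, e5]
    ring
  -- bound term 0
  have hbd0 : |ψ 0 t * (z ^ (-p) - (n:ℝ) ^ (-p)) - p * ψ 0 t * x| ≤ δ/4 * x := by
    obtain ⟨hlo, hhi⟩ := rpow_diff_bounds hp0 hz1
    rw [hzn] at hlo hhi
    have hg1 : 0 ≤ (z ^ (-p) - (n:ℝ) ^ (-p)) - p * x := by linarith [hlo]
    have hg2 : (z ^ (-p) - (n:ℝ) ^ (-p)) - p * x ≤ p * ε₁ * x := by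
      have h1 := mul_le_mul_of_nonneg_left hratx hp0.le
      linarith [hhi]
    have habs : |(z ^ (-p) - (n:ℝ) ^ (-p)) - p * x| ≤ p * ε₁ * x := by
      rw [abs_of_nonneg hg1]; exact hg2
    have hψ0 : |ψ 0 t| ≤ C 0 := hC 0 (Nat.zero_le M) t ht
    have hε₁2 : ε₁ ≤ δ/(4*(C 0*p+1)) := min_le_right _ _
    have hApos : (0:ℝ) ≤ C 0 * p := mul_nonneg hCψ0 hp0.le
    have key : C 0 * p * ε₁ ≤ δ/4 := by
      have h1 : C 0 * p * ε₁ ≤ C 0 * p * (δ/(4*(C 0*p+1))) :=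
        mul_le_mul_of_nonneg_left hε₁2 hApos
      have h2 : C 0 * p * (δ/(4*(C 0*p+1))) ≤ δ/4 := by
        rw [← mul_div_assoc, div_le_div_iff₀
          (by linarith [hApos] : (0:ℝ) < 4*(C 0*p+1)) (by norm_num : (0:ℝ) < 4)]
        have h4 : 0 ≤ C 0 * p * δ := mul_nonneg hApos hδ.le
        linarith
      linarith
    calc |ψ 0 t * (z ^ (-p) - (n:ℝ) ^ (-p)) - p * ψ 0 t * x|
        = |ψ 0 t| * |(z ^ (-p) - (n:ℝ) ^ (-p)) - p * x| := by
          rw [← abs_mul]; congr 1; ring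
      _ ≤ C 0 * (p * ε₁ * x) :=
          mul_le_mul hψ0 habs (abs_nonneg _) hCψ0
      _ ≤ δ/4 * x := by
          have h3 := mul_le_mul_of_nonneg_right key hxpos.le
          linarith
  -- bound tail sum
  have hper : ∀ i ∈ Finset.range M,
      |ψ (i+1) t * (z ^ (-(s (i+1))) - (n:ℝ) ^ (-(s (i+1))))| ≤ δ/(4*(M+1)) * x := by
    intro i hi
    have hiM : i+1 ≤ M := by simp only [Finset.mem_range] at hi; omega
    obtain ⟨hqp, hqp1⟩ := hs (i+1) (by omega) hiM
    have hq0 : 0 < s (i+1) := lt_trans hp0 hqp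
    obtain ⟨hlo, hhi⟩ := rpow_diff_bounds hq0 hz1
    rw [hzn] at hlo hhi
    have hq1pos : (0:ℝ) < s (i+1) * (n:ℝ) ^ (-(s (i+1))-1) := by
      exact mul_pos hq0 (Real.rpow_pos_of_pos hn0 _)
    have hnneg : 0 ≤ z ^ (-(s (i+1))) - (n:ℝ) ^ (-(s (i+1))) := by linarith
    have hsplitexp : z ^ (-(s (i+1))-1) = z ^ (-p-1) * z ^ (-(s (i+1)-p)) := by
      rw [← Real.rpow_add hz0]; ring_nf
    have hzq : z ^ (-(s (i+1)-p)) ≤ δ/(4*(M+1)*(2*(C (i+1))*(p+1)+1)) :=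
      htl (i+1) (Finset.mem_Icc.mpr ⟨by omega, hiM⟩)
    have hzq0 : 0 ≤ z ^ (-(s (i+1)-p)) := Real.rpow_nonneg hz0.le _
    have hδk0 : 0 < δ/(4*(M+1)*(2*(C (i+1))*(p+1)+1)) := by
      have h1 : (0:ℝ) < 2*(C (i+1))*(p+1)+1 := by nlinarith [hCnn (i+1)]
      have h2 : (0:ℝ) < 4*((M:ℝ)+1) := by positivity
      have h3 : (0:ℝ) < 4*((M:ℝ)+1)*(2*(C (i+1))*(p+1)+1) := mul_pos h2 h1
      exact div_pos hδ h3
    have hstep : z ^ (-(s (i+1))-1) ≤ (2*x) * (δ/(4*(M+1)*(2*(C (i+1))*(p+1)+1))) := by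
      rw [hsplitexp]
      exact mul_le_mul hrat2 hzq hzq0 (by linarith [hxpos])
    have hψk : |ψ (i+1) t| ≤ C (i+1) := hC (i+1) hiM t ht
    have hd1 : z ^ (-(s (i+1))) - (n:ℝ) ^ (-(s (i+1))) ≤ (p+1) * z ^ (-(s (i+1))-1) := by
      have hz2 : 0 ≤ z ^ (-(s (i+1))-1) := Real.rpow_nonneg hz0.le _
      have := mul_le_mul_of_nonneg_right hqp1 hz2
      linarith
    have hd2 : (p+1) * z ^ (-(s (i+1))-1)
        ≤ (p+1) * ((2*x) * (δ/(4*(M+1)*(2*(C (i+1))*(p+1)+1)))) :=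
      mul_le_mul_of_nonneg_left hstep (by linarith)
    have habs2 : |z ^ (-(s (i+1))) - (n:ℝ) ^ (-(s (i+1)))|
        ≤ (p+1) * ((2*x) * (δ/(4*(M+1)*(2*(C (i+1))*(p+1)+1)))) := by
      rw [abs_of_nonneg hnneg]; linarith
    have hnum : C (i+1) * ((p+1) * ((2*x) * (δ/(4*(M+1)*(2*(C (i+1))*(p+1)+1)))))
        ≤ δ/(4*(M+1)) * x := by
      set D : ℝ := 2*(C (i+1))*(p+1) with hD
      have hD0 : 0 ≤ D := by
        have := hCnn (i+1); simp only [hD]; nlinarith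
      have hE : (0:ℝ) < 4*((M:ℝ)+1) := by positivity
      have heq : C (i+1) * ((p+1) * ((2*x) * (δ/(4*(M+1)*(D+1)))))
          = (D * (δ/(4*(M+1)*(D+1)))) * x := by ring
      rw [heq]
      have hkey : D * (δ/(4*(M+1)*(D+1))) ≤ δ/(4*(M+1)) := by
        have hDE : (0:ℝ) < 4*((M:ℝ)+1)*(D+1) := by
          apply mul_pos hE; linarith
        rw [← mul_div_assoc, div_le_div_iff₀ hDE hE]
        have h4 : 0 ≤ D * δ := mul_nonneg hD0 hδ.le
        have h5 : 0 ≤ ((M:ℝ)+1) * (D*δ) := mul_nonneg (by positivity) h4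
        nlinarith
      exact mul_le_mul_of_nonneg_right hkey hxpos.le
    calc |ψ (i+1) t * (z ^ (-(s (i+1))) - (n:ℝ) ^ (-(s (i+1))))|
        = |ψ (i+1) t| * |z ^ (-(s (i+1))) - (n:ℝ) ^ (-(s (i+1)))| := abs_mul _ _
      _ ≤ C (i+1) * ((p+1) * ((2*x) * (δ/(4*(M+1)*(2*(C (i+1))*(p+1)+1))))) :=
          mul_le_mul hψk habs2 (abs_nonneg _) (hCnn (i+1))
      _ ≤ δ/(4*(M+1)) * x := hnum
  have hbdsum : |∑ i ∈ Finset.range M, ψ (i+1) t * (z ^ (-(s (i+1))) - (n:ℝ) ^ (-(s (i+1))))|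
      ≤ δ/4 * x := by
    calc |∑ i ∈ Finset.range M, ψ (i+1) t * (z ^ (-(s (i+1))) - (n:ℝ) ^ (-(s (i+1))))|
        ≤ ∑ i ∈ Finset.range M, |ψ (i+1) t * (z ^ (-(s (i+1))) - (n:ℝ) ^ (-(s (i+1))))| :=
          Finset.abs_sum_le_sum_abs _ _
      _ ≤ ∑ _i ∈ Finset.range M, δ/(4*(M+1)) * x := Finset.sum_le_sum hper
      _ = M * (δ/(4*(M+1))) * x := by
          rw [Finset.sum_const, Finset.card_range]; push_cast; ring
      _ ≤ δ/4 * x := by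
          have hM : (0:ℝ) ≤ M := Nat.cast_nonneg M
          have hkey : (M:ℝ) * (δ/(4*(M+1))) ≤ δ/4 := by
            rw [← mul_div_assoc, div_le_div_iff₀ (by positivity) (by norm_num : (0:ℝ) < 4)]
            have h4 : 0 ≤ (M:ℝ) * δ := mul_nonneg hM hδ.le
            linarith
          have := mul_le_mul_of_nonneg_right hkey hxpos.le
          linarith
  have habssplit : |φ (n-1) t - φ n t - p * ψ 0 t * x|
      ≤ |ψ 0 t * (z ^ (-p) - (n:ℝ) ^ (-p)) - p * ψ 0 t * x|
        + |∑ i ∈ Finset.range M, ψ (i+1) t * (z ^ (-(s (i+1))) - (n:ℝ) ^ (-(s (i+1))))|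
        + (|r (n-1) t| + |r n t|) := by
    rw [hsplit]
    have h1 := abs_add_le (ψ 0 t * (z ^ (-p) - (n:ℝ) ^ (-p)) - p * ψ 0 t * x
      + (∑ i ∈ Finset.range M, ψ (i+1) t * (z ^ (-(s (i+1))) - (n:ℝ) ^ (-(s (i+1))))))
      (r (n-1) t - r n t)
    have h2 := abs_add_le (ψ 0 t * (z ^ (-p) - (n:ℝ) ^ (-p)) - p * ψ 0 t * x)
      (∑ i ∈ Finset.range M, ψ (i+1) t * (z ^ (-(s (i+1))) - (n:ℝ) ^ (-(s (i+1)))))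
    have h3 := abs_sub (r (n-1) t) (r n t)
    linarith
  have hδx : 0 ≤ δ * x := mul_nonneg hδ.le hxpos.le
  linarith [habssplit, hbd0, hbdsum, hrn1, hrn]

/-- Construction of uniform majorant sequences `w_n^± = ±φ_n + B^± n^{-1}`:
they satisfy `w_n^±(1 + w_{n-1}^±) ≥ w_{n-1}^± + φ_n²` for all `n > N`, uniformly on `I`. -/
theorem uniform_majorant_sequences (I : Set ℝ) (p : ℝ) (hp0 : 0 < p) (hp1 : p < 1)
    (M : ℕ) (ψ : ℕ → ℝ → ℝ) (s : ℕ → ℝ) (φ : ℕ → ℝ → ℝ)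
    (hs0 : s 0 = p)
    (hs : ∀ k, 1 ≤ k → k ≤ M → p < s k ∧ s k ≤ p + 1)
    (hψ0pos : ∃ c > (0 : ℝ), ∀ t ∈ I, c ≤ ψ 0 t)
    (hψbdd : ∀ k ≤ M, ∃ C : ℝ, ∀ t ∈ I, |ψ k t| ≤ C)
    (hφ : LittleOI I
      (fun n t => φ n t - ∑ k ∈ Finset.range (M + 1), ψ k t * (n : ℝ) ^ (-(s k)))
      (fun n => (n : ℝ) ^ (-p - 1)))
    (Bp Bm : ℝ) (hBm : Bm < p / 2) (hBp : p / 2 < Bp) :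
    ∃ N : ℕ, ∀ n > N, ∀ t ∈ I,
      (φ n t + Bp * (n : ℝ)⁻¹) * (1 + (φ (n - 1) t + Bp * ((n : ℝ) - 1)⁻¹)) ≥
        (φ (n - 1) t + Bp * ((n : ℝ) - 1)⁻¹) + (φ n t) ^ 2 ∧
      (-φ n t + Bm * (n : ℝ)⁻¹) * (1 + (-φ (n - 1) t + Bm * ((n : ℝ) - 1)⁻¹)) ≥
        (-φ (n - 1) t + Bm * ((n : ℝ) - 1)⁻¹) + (φ n t) ^ 2 := by
  classical
  rcases Set.eq_empty_or_nonempty I with hIe | ⟨t₀, ht₀⟩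
  · exact ⟨0, fun n _ t ht => absurd ht (by simp [hIe])⟩
  obtain ⟨c, hc, hcψ⟩ := hψ0pos
  choose! C₀ hC₀ using hψbdd
  set C : ℕ → ℝ := fun k => max (C₀ k) 0 with hCdef
  have hC : ∀ k ≤ M, ∀ t ∈ I, |ψ k t| ≤ C k :=
    fun k hk t ht => le_trans (hC₀ k hk t ht) (le_max_left _ _)
  have hCnn : ∀ k, 0 ≤ C k := fun k => le_max_right _ _
  set Cψ : ℝ := C 0 with hCψdef
  have hCψ0 : 0 ≤ Cψ := hCnn 0
  have hBp0 : 0 < Bp := by linarith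
  have hγp : 0 < 2*Bp - p := by linarith
  have hγm : 0 < p - 2*max Bm 0 := by
    rcases le_total Bm 0 with h | h
    · rw [max_eq_right h]; linarith
    · rw [max_eq_left h]; linarith
  have hBm0 : 0 ≤ max Bm 0 := le_max_right _ _
  have hDm : 0 < 3 + |Bm| + 2*(max Bm 0)*(Cψ+2) := by
    have h1 : 0 ≤ |Bm| := abs_nonneg _
    have h2 : 0 ≤ 2*(max Bm 0)*(Cψ+2) := by positivity
    linarith
  have hDp : (0:ℝ) < 3 + 3*Bp := by linarith
  set ε : ℝ := min 1 (min (c/2)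
    (min ((2*Bp-p)*c/(3+3*Bp)) ((p-2*max Bm 0)*c/(3 + |Bm| + 2*(max Bm 0)*(Cψ+2))))) with hεdef
  have hε0 : 0 < ε :=
    lt_min one_pos (lt_min (by linarith)
      (lt_min (div_pos (mul_pos hγp hc) hDp) (div_pos (mul_pos hγm hc) hDm)))
  have hε1 : ε ≤ 1 := min_le_left _ _
  have hεc : ε ≤ c/2 := le_trans (min_le_right _ _) (min_le_left _ _)
  have hε2 : ε * (3 + 3*Bp) ≤ (2*Bp - p) * c := by
    have h : ε ≤ (2*Bp-p)*c/(3+3*Bp) :=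
      le_trans (min_le_right _ _) (le_trans (min_le_right _ _) (min_le_left _ _))
    calc ε * (3+3*Bp) ≤ ((2*Bp-p)*c/(3+3*Bp)) * (3+3*Bp) :=
          mul_le_mul_of_nonneg_right h hDp.le
      _ = (2*Bp-p)*c := div_mul_cancel₀ _ hDp.ne'
  have hε3 : ε * (3 + |Bm| + 2*(max Bm 0)*(Cψ+2)) ≤ (p - 2*max Bm 0) * c := by
    have h : ε ≤ (p-2*max Bm 0)*c/(3 + |Bm| + 2*(max Bm 0)*(Cψ+2)) :=
      le_trans (min_le_right _ _) (le_trans (min_le_right _ _) (min_le_right _ _))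
    calc ε * (3 + |Bm| + 2*(max Bm 0)*(Cψ+2))
        ≤ ((p-2*max Bm 0)*c/(3 + |Bm| + 2*(max Bm 0)*(Cψ+2)))
            * (3 + |Bm| + 2*(max Bm 0)*(Cψ+2)) :=
          mul_le_mul_of_nonneg_right h hDm.le
      _ = (p-2*max Bm 0)*c := div_mul_cancel₀ _ hDm.ne'
  -- eventual facts
  have E1 := lemL1 hp0 hs0 hs hC hCnn hφ hε0
  have E1a := lemL1 hp0 hs0 hs hC hCnn hφ one_pos
  have E2 := lemL2 hp0 hp1 hs0 hs hC hCnn hφ hε0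
  have E2a := lemL2 hp0 hp1 hs0 hs hC hCnn hφ one_pos
  have E1' : ∀ᶠ n : ℕ in atTop, ∀ t ∈ I,
      |φ (n-1) t - ψ 0 t * ((n:ℝ)-1) ^ (-p)| ≤ ε * ((n:ℝ)-1) ^ (-p) := by
    obtain ⟨N₁, hN₁⟩ := eventually_atTop.mp E1
    refine eventually_atTop.2 ⟨N₁+2, fun n hn => ?_⟩
    have h := hN₁ (n-1) (by omega)
    have hcast : ((n-1:ℕ):ℝ) = (n:ℝ)-1 := by
      push_cast [Nat.cast_sub (show 1 ≤ n by omega)]; ring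
    rwa [hcast] at h
  have hδy : 0 < ε/((Cψ+1)*(p*Cψ+2)) := by
    have h1 : (0:ℝ) < Cψ + 1 := by linarith
    have h2 : (0:ℝ) < p*Cψ+2 := by
      have := mul_nonneg hp0.le hCψ0; linarith
    exact div_pos hε0 (mul_pos h1 h2)
  have Ey := eventually_small hp0 hδy
  have ER := eventually_ratio (by linarith : (0:ℝ) < p+1) (by linarith) hε0
  have ER1 := eventually_ratio (by linarith : (0:ℝ) < p+1) (by linarith) one_pos
  have ES := eventually_small (show (0:ℝ) < 1-p by linarith) (half_pos hε0)
  obtain ⟨N, hN⟩ := eventually_atTop.mp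
    (((((((E1.and E1').and E2).and (E1a.and E2a)).and (Ey.and ES)).and
      (ER.and ER1)).and (eventually_ge_atTop 2)))
  refine ⟨N, fun n hn t ht => ?_⟩
  obtain ⟨⟨⟨⟨⟨⟨hE1, hE1'⟩, hE2⟩, hE1a, hE2a⟩, hEy, hES⟩, hER, hER1⟩, hn2⟩ := hN n hn.le
  -- setup
  have hn2' : (2:ℝ) ≤ n := by exact_mod_cast hn2
  set z : ℝ := (n:ℝ) - 1 with hzdef
  have hz1 : (1:ℝ) ≤ z := by simp only [hzdef]; linarith
  have hz0 : (0:ℝ) < z := by linarith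
  have hn0 : (0:ℝ) < n := by linarith
  set x : ℝ := (n:ℝ) ^ (-p-1) with hxdef
  set y : ℝ := (n:ℝ) ^ (-p) with hydef
  set y' : ℝ := z ^ (-p) with hy'def
  have hx : 0 < x := Real.rpow_pos_of_pos hn0 _
  have hy : 0 < y := Real.rpow_pos_of_pos hn0 _
  have hyy' : y ≤ y' := Real.rpow_le_rpow_of_nonpos hz0 (by linarith) (by linarith)
  have hm : (0:ℝ) ≤ (n:ℝ)⁻¹ := by positivity
  have hmm' : (n:ℝ)⁻¹ ≤ z⁻¹ := by
    apply inv_anti₀ hz0; linarith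
  have hym : y * (n:ℝ)⁻¹ = x := by
    rw [hydef, hxdef, ← Real.rpow_neg_one (n:ℝ), ← Real.rpow_add hn0]
    rw [show -p + -1 = -p - 1 by ring]
  have hzpm : y' * z⁻¹ = z ^ (-p-1) := by
    rw [hy'def, ← Real.rpow_neg_one z, ← Real.rpow_add hz0]
    rw [show -p + -1 = -p - 1 by ring]
  have hratx : z ^ (-p-1) ≤ (1+ε) * x := by
    have h := hER
    rw [show -(p+1) = -p-1 by ring] at h
    exact h
  have hrat2 : z ^ (-p-1) ≤ 2 * x := by
    have h := hER1
    rw [show -(p+1) = -p-1 by ring] at h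
    have : (1:ℝ)+1 = 2 := by norm_num
    rw [this] at h
    exact h
  have hym'U : y * z⁻¹ ≤ (1+ε)*x := by
    have h1 : y * z⁻¹ ≤ y' * z⁻¹ :=
      mul_le_mul_of_nonneg_right hyy' (by positivity)
    rw [hzpm] at h1
    exact le_trans h1 hratx
  have hy'mU : y' * (n:ℝ)⁻¹ ≤ (1+ε)*x := by
    have h1 : y' * (n:ℝ)⁻¹ ≤ y' * z⁻¹ :=
      mul_le_mul_of_nonneg_left hmm' (Real.rpow_nonneg hz0.le _)
    rw [hzpm] at h1
    exact le_trans h1 hratx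
  have hdiff : z⁻¹ - (n:ℝ)⁻¹ ≤ ε * x := by
    have h1 : z⁻¹ - (n:ℝ)⁻¹ = ((n:ℝ) - z)/(z*(n:ℝ)) := inv_sub_inv hz0.ne' hn0.ne'
    have h2 : ((n:ℝ) - z) = 1 := by simp [hzdef]
    have h3 : (1:ℝ)/(z*(n:ℝ)) ≤ 1/(z*z) := by
      apply one_div_le_one_div_of_le (by positivity)
      apply mul_le_mul_of_nonneg_left (by linarith) hz0.le
    have h4 : z^(-(p+1)) * z^(-(1-p)) = 1/(z*z) := by
      rw [← Real.rpow_add hz0, show -(p+1) + -(1-p) = (-2:ℝ) by ring,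
        Real.rpow_neg hz0.le, show ((2:ℝ)) = ((2:ℕ):ℝ) by norm_num, Real.rpow_natCast]
      rw [sq, one_div]
    have h5 : z^(-(p+1)) * z^(-(1-p)) ≤ (2*x) * (ε/2) := by
      apply mul_le_mul _ hES.1 (Real.rpow_nonneg hz0.le _) (by linarith)
      rw [show -(p+1) = -p-1 by ring]
      exact hrat2
    rw [h1, h2]
    calc (1:ℝ)/(z*(n:ℝ)) ≤ 1/(z*z) := h3
      _ = z^(-(p+1)) * z^(-(1-p)) := h4.symm
      _ ≤ (2*x) * (ε/2) := h5
      _ = ε * x := by ring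
  have hu1 : c ≤ ψ 0 t := hcψ t ht
  have hu2 : ψ 0 t ≤ Cψ := le_trans (le_abs_self _) (hC 0 (Nat.zero_le M) t ht)
  have ha : |φ n t - ψ 0 t * y| ≤ ε * y := hE1 t ht
  have hb : |φ (n-1) t - ψ 0 t * y'| ≤ ε * y' := hE1' t ht
  have hba : |φ (n-1) t - φ n t - p * ψ 0 t * x| ≤ ε * x := hE2 t ht
  -- hab
  have hab : |φ n t * (φ (n-1) t - φ n t)| ≤ ε * x := by
    have haA : |φ n t| ≤ (Cψ+1)*y := by
      have h1 := hE1a t ht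
      have h2 : |ψ 0 t * y| ≤ Cψ * y := by
        rw [abs_mul, abs_of_nonneg hy.le]
        exact mul_le_mul_of_nonneg_right (hC 0 (Nat.zero_le M) t ht) hy.le
      calc |φ n t| ≤ |φ n t - ψ 0 t * y| + |ψ 0 t * y| := by
            have := abs_add_le (φ n t - ψ 0 t * y) (ψ 0 t * y)
            simpa using this
        _ ≤ 1*y + Cψ*y := add_le_add h1 h2
        _ = (Cψ+1)*y := by ring
    have hbaA : |φ (n-1) t - φ n t| ≤ (p*Cψ+1)*x := by
      have h1 := hE2a t ht
      have h2 : |p * ψ 0 t * x| ≤ p*Cψ*x := by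
        rw [abs_mul, abs_mul, abs_of_nonneg hp0.le, abs_of_nonneg hx.le]
        have h3 : |ψ 0 t| ≤ Cψ := hC 0 (Nat.zero_le M) t ht
        have := mul_le_mul_of_nonneg_right
          (mul_le_mul_of_nonneg_left h3 hp0.le) hx.le
        linarith
      calc |φ (n-1) t - φ n t|
          ≤ |φ (n-1) t - φ n t - p * ψ 0 t * x| + |p * ψ 0 t * x| := by
            have := abs_add_le (φ (n-1) t - φ n t - p * ψ 0 t * x) (p * ψ 0 t * x)
            simpa using this
        _ ≤ 1*x + p*Cψ*x := add_le_add h1 h2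
        _ = (p*Cψ+1)*x := by ring
    have hprod : |φ n t * (φ (n-1) t - φ n t)| ≤ ((Cψ+1)*y) * ((p*Cψ+1)*x) := by
      rw [abs_mul]
      have hpc : (0:ℝ) ≤ p*Cψ := mul_nonneg hp0.le hCψ0
      apply mul_le_mul haA hbaA (abs_nonneg _) (mul_nonneg (by linarith) hy.le)
    have hAB : (0:ℝ) < (Cψ+1)*(p*Cψ+2) := by
      have h1 : (0:ℝ) < Cψ + 1 := by linarith
      have h2 : (0:ℝ) < p*Cψ+2 := by
        have := mul_nonneg hp0.le hCψ0; linarith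
      exact mul_pos h1 h2
    have hyδ : y ≤ ε/((Cψ+1)*(p*Cψ+2)) := hEy.2
    have h5 : ((Cψ+1)*(p*Cψ+2)) * y ≤ ε := by
      have h6 := mul_le_mul_of_nonneg_left hyδ hAB.le
      rw [mul_comm ((Cψ+1)*(p*Cψ+2)) (ε/((Cψ+1)*(p*Cψ+2))),
        div_mul_cancel₀ _ hAB.ne'] at h6
      exact h6
    have h7 : ((Cψ+1)*(p*Cψ+1)) * y ≤ ((Cψ+1)*(p*Cψ+2)) * y := by
      apply mul_le_mul_of_nonneg_right _ hy.le
      have h1 : (0:ℝ) ≤ Cψ + 1 := by linarith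
      apply mul_le_mul_of_nonneg_left (by linarith) h1
    have h8 : (((Cψ+1)*(p*Cψ+1)) * y) * x ≤ ε * x :=
      mul_le_mul_of_nonneg_right (le_trans h7 h5) hx.le
    calc |φ n t * (φ (n-1) t - φ n t)| ≤ ((Cψ+1)*y) * ((p*Cψ+1)*x) := hprod
      _ = (((Cψ+1)*(p*Cψ+1)) * y) * x := by ring
      _ ≤ ε * x := h8
  constructor
  · exact key_plus hc hu1 hBp hp0 hε0 hεc hε2 hx hy hyy' hm hmm' hym hdiff ha hb hba hab
  · exact key_minus hc hu1 hu2 hBm hp0 hε0 hεc hε1 hε3 hx hy hyy' hm hmm' hym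
      hym'U hy'mU hdiff ha hb hba hab
end
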